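/- arXiv:1706.04064 — 4 statements merged into one kernel-verified Lean document; each statement's English description precedes it below -/
import Mathlib

section
/- Let Y be a non-negative integer-valued random variable with E[Y] > 0, and suppose there is a coupling (Y, Y*) of Y with its size-biased version Y* and a p ∈ (0,1] such that P(Y* ≤ Y + 1 | Y* ≥ x) ≥ p for every x with P(Y* ≥ x) > 0. Then for every x, p·P(Y* ≥ x) ≤ P(Y + 1 ≥ x); equivalently, I_p·Y* ≤_st Y + 1, where I_p is a Bernoulli random variable with mean p independent of Y*. -/
open MeasureTheory ProbabilityTheory

/-- If `(Y, Ys)` is a coupling of `Y` with its size-biased version such that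
`P(Ys ≤ Y + 1 | Ys ≥ x) ≥ p` whenever `P(Ys ≥ x) > 0`, then
`p·P(Ys ≥ x) ≤ P(Y + 1 ≥ x)` for every `x`; that is, `I_p·Ys ≤_st Y + 1`. -/
theorem size_bias_approx_monotone_tail_bound
    {Ω : Type*} [MeasurableSpace Ω] (P : Measure Ω) [IsProbabilityMeasure P]
    (Y Ys : Ω → ℕ) (hYmeas : Measurable Y) (hYsmeas : Measurable Ys)
    (μ : ℝ) (hμ : μ = ∫ ω, (Y ω : ℝ) ∂P) (hμpos : 0 < μ)
    (hInt : Integrable (fun ω => (Y ω : ℝ)) P)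
    (hsb : ∀ j : ℕ, (P {ω | Ys ω = j}).toReal = j * (P {ω | Y ω = j}).toReal / μ)
    (p : ℝ) (hp0 : 0 < p) (hp1 : p ≤ 1)
    (hcond : ∀ x : ℕ, 0 < P {ω | x ≤ Ys ω} →
      p ≤ (P {ω | Ys ω ≤ Y ω + 1 ∧ x ≤ Ys ω}).toReal / (P {ω | x ≤ Ys ω}).toReal) :
    ∀ x : ℕ, p * (P {ω | x ≤ Ys ω}).toReal ≤ (P {ω | x ≤ Y ω + 1}).toReal := by
  intro x
  by_cases h : 0 < P {ω | x ≤ Ys ω}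
  · have hne : P {ω | x ≤ Ys ω} ≠ ⊤ := measure_ne_top P _
    have hA : 0 < (P {ω | x ≤ Ys ω}).toReal := ENNReal.toReal_pos h.ne' hne
    have hc := hcond x h
    have h1 : p * (P {ω | x ≤ Ys ω}).toReal
        ≤ (P {ω | Ys ω ≤ Y ω + 1 ∧ x ≤ Ys ω}).toReal := by
      have := mul_le_mul_of_nonneg_right hc hA.le
      rwa [div_mul_cancel₀ _ hA.ne'] at this
    refine h1.trans ?_
    have hsub : {ω | Ys ω ≤ Y ω + 1 ∧ x ≤ Ys ω} ⊆ {ω | x ≤ Y ω + 1} := by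
      intro ω hω
      exact hω.2.trans hω.1
    exact ENNReal.toReal_mono (measure_ne_top P _) (measure_mono hsub)
  · have h0 : P {ω | x ≤ Ys ω} = 0 := by
      simpa using (not_lt.mp h)
    rw [h0]
    simp [ENNReal.toReal_nonneg]
end

section
/- Let W be a non-negative integer-valued random variable with E[W] = ν > 0, and suppose there is a joint construction (W, Z, W*), where W* has the size-biased distribution of W and Z is a non-negative integer-valued random variable, such that W + 1 − Z ≤ W* almost surely. Let X be a non-negative integer-valued random variable with E[X] = φ < ∞, independent of (W, Z, W*), and let ξ ~ Be(q) with q ∈ (0,1] be independent of all else. Set Y = ξ·W + X. Then there exist a coupling (Y, Y*) of Y with its size-biased version Y* and a non-negative integer-valued random variable Z̃ on the same space with the same distribution as Z, such that P(Y* ≥ Y + 1 − Z̃ | Y + 1 − Z̃ ≥ x) ≥ q²ν/(qν + φ) for every x with P(Y + 1 − Z̃ ≥ x) > 0. -/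
open MeasureTheory ProbabilityTheory
open scoped ENNReal

private lemma decomp_lemma {Ω : Type*} [MeasurableSpace Ω] (P : Measure Ω)
    (f g : Ω → ℕ) (hf : Measurable f) (hg : Measurable g) (j : ℕ) :
    P {a | f a + g a = j} = ∑ k ∈ Finset.range (j+1), P {a | f a = j - k ∧ g a = k} := by
  rw [← measure_biUnion_finset ?_ ?_]
  · congr 1
    ext a
    simp only [Set.mem_iUnion, Finset.mem_range, Set.mem_setOf_eq]
    constructor
    · intro h; exact ⟨g a, by omega, by omega, rfl⟩
    · rintro ⟨k, hk, h1, h2⟩; omega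
  · intro i hi k hk hik
    simp only [Finset.coe_range, Set.mem_Iio] at hi hk
    apply Set.disjoint_left.mpr
    rintro a ⟨-, h2⟩ ⟨-, h4⟩
    exact hik (by omega)
  · intro k _
    exact (hf (measurableSet_singleton (j - k))).inter (hg (measurableSet_singleton k))


/-- **Theorem 3 (noise-contaminated positively dependent models).**
Let `W` be non-negative integer-valued with mean `ν > 0`, admitting a joint construction
`(W, Z, Ws)` with `Ws` size-biased and `W + 1 − Z ≤ Ws` a.s.; let `X` be non-negative
integer-valued with mean `φ`, independent of `(W, Z, Ws)`; and let `ξ ~ Be(q)` be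
independent of all else.  Set `Y = ξ·W + X`.  Then there are a coupling `(Y', Ys)` of `Y`
with its size-biased version and a random variable `Z'` distributed as `Z` such that
`P(Ys ≥ Y' + 1 − Z' | Y' + 1 − Z' ≥ x) ≥ q²ν/(qν + φ)` for every `x` with positive
conditioning probability. -/
theorem noise_contaminated_pos_dep
    {Ω : Type*} [MeasurableSpace Ω] (P : Measure Ω) [IsProbabilityMeasure P]
    (W Z Ws X ξ : Ω → ℕ)
    (hWmeas : Measurable W) (hZmeas : Measurable Z) (hWsmeas : Measurable Ws)
    (hXmeas : Measurable X) (hξmeas : Measurable ξ)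
    (ν : ℝ) (hν : ν = ∫ ω, (W ω : ℝ) ∂P) (hνpos : 0 < ν)
    (hWInt : Integrable (fun ω => (W ω : ℝ)) P)
    (φ : ℝ) (hφ : φ = ∫ ω, (X ω : ℝ) ∂P)
    (hXInt : Integrable (fun ω => (X ω : ℝ)) P)
    (hsbW : ∀ j : ℕ, (P {ω | Ws ω = j}).toReal = j * (P {ω | W ω = j}).toReal / ν)
    (hmono : ∀ᵐ ω ∂P, (W ω : ℤ) + 1 - (Z ω : ℤ) ≤ (Ws ω : ℤ))
    (hXindep : IndepFun (fun ω => (W ω, Z ω, Ws ω)) X P)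
    (q : ℝ) (hq0 : 0 < q) (hq1 : q ≤ 1)
    (hξ1 : (P {ω | ξ ω = 1}).toReal = q)
    (hξ0 : (P {ω | ξ ω = 0}).toReal = 1 - q)
    (hξindep : IndepFun (fun ω => (W ω, Z ω, Ws ω, X ω)) ξ P) :
    ∃ (Ω' : Type) (_ : MeasurableSpace Ω') (P' : Measure Ω') (Y' Ys Z' : Ω' → ℕ),
      IsProbabilityMeasure P' ∧ Measurable Y' ∧ Measurable Ys ∧ Measurable Z' ∧
      (∀ j : ℕ, P' {ω | Y' ω = j} = P {ω | ξ ω * W ω + X ω = j}) ∧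
      (∀ j : ℕ, (P' {ω | Ys ω = j}).toReal
        = j * (P {ω | ξ ω * W ω + X ω = j}).toReal / (q * ν + φ)) ∧
      (∀ j : ℕ, P' {ω | Z' ω = j} = P {ω | Z ω = j}) ∧
      (∀ x : ℤ, 0 < P' {ω | x ≤ (Y' ω : ℤ) + 1 - (Z' ω : ℤ)} →
        q ^ 2 * ν / (q * ν + φ)
          ≤ (P' {ω | (Y' ω : ℤ) + 1 - (Z' ω : ℤ) ≤ (Ys ω : ℤ)
                ∧ x ≤ (Y' ω : ℤ) + 1 - (Z' ω : ℤ)}).toReal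
              / (P' {ω | x ≤ (Y' ω : ℤ) + 1 - (Z' ω : ℤ)}).toReal) := by
  classical
  have hφnn : 0 ≤ φ := hφ ▸ integral_nonneg fun ω => Nat.cast_nonneg _
  have hcpos : 0 < q * ν + φ := by nlinarith
  -- ξ values as ENNReal
  have hmeasξ1 : MeasurableSet {ω | ξ ω = 1} := hξmeas (measurableSet_singleton 1)
  have hmeasξ0 : MeasurableSet {ω | ξ ω = 0} := hξmeas (measurableSet_singleton 0)
  have hξ1' : P {ω | ξ ω = 1} = ENNReal.ofReal q := by
    rw [← hξ1]; exact (ENNReal.ofReal_toReal (measure_ne_top P _)).symm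
  have hξ0' : P {ω | ξ ω = 0} = ENNReal.ofReal (1 - q) := by
    rw [← hξ0]; exact (ENNReal.ofReal_toReal (measure_ne_top P _)).symm
  have hdisj01 : Disjoint {ω | ξ ω = 0} {ω | ξ ω = 1} := by
    apply Set.disjoint_left.mpr
    intro ω h0 h1
    simp only [Set.mem_setOf_eq] at h0 h1
    omega
  have hξu : P ({ω | ξ ω = 0} ∪ {ω | ξ ω = 1}) = 1 := by
    rw [measure_union hdisj01 hmeasξ1, hξ0', hξ1',
      ← ENNReal.ofReal_add (by linarith) hq0.le]
    norm_num
  have hξN : P ({ω | ξ ω = 0} ∪ {ω | ξ ω = 1})ᶜ = 0 := by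
    rw [measure_compl (hmeasξ0.union hmeasξ1) (measure_ne_top P _), hξu, measure_univ]
    simp
  -- splitting along ξ
  have hsplit : ∀ T : Set Ω, MeasurableSet T →
      P T = P (T ∩ {ω | ξ ω = 0}) + P (T ∩ {ω | ξ ω = 1}) := by
    intro T hT
    have h1 : P (T ∩ ({ω | ξ ω = 0} ∪ {ω | ξ ω = 1})) = P T :=
      measure_inter_conull hξN
    rw [← h1, Set.inter_union_distrib_left,
      measure_union (hdisj01.mono Set.inter_subset_right Set.inter_subset_right)
        (hT.inter hmeasξ1)]
  -- independence helpers
  have hξE : ∀ (A : Set (ℕ×ℕ×ℕ×ℕ)) (i : ℕ),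
      P ((fun ω => (W ω, Z ω, Ws ω, X ω))⁻¹' A ∩ {ω | ξ ω = i})
        = P ((fun ω => (W ω, Z ω, Ws ω, X ω))⁻¹' A) * P {ω | ξ ω = i} := by
    intro A i
    have h := hξindep.measure_inter_preimage_eq_mul A {i}
      (Set.to_countable A).measurableSet (measurableSet_singleton i)
    have he : ξ ⁻¹' {i} = {ω | ξ ω = i} := rfl
    rwa [he] at h
  have hXE : ∀ (A : Set (ℕ×ℕ×ℕ)) (k : ℕ),
      P ((fun ω => (W ω, Z ω, Ws ω))⁻¹' A ∩ {ω | X ω = k})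
        = P ((fun ω => (W ω, Z ω, Ws ω))⁻¹' A) * P {ω | X ω = k} := by
    intro A k
    have h := hXindep.measure_inter_preimage_eq_mul A {k}
      (Set.to_countable A).measurableSet (measurableSet_singleton k)
    have he : X ⁻¹' {k} = {ω | X ω = k} := rfl
    rwa [he] at h
  -- F4
  have hF4 : ∀ a b : ℕ, P {ω | Ws ω = a ∧ X ω = b}
      = P {ω | Ws ω = a} * P {ω | X ω = b} := by
    intro a b
    have h := hXE {p : ℕ×ℕ×ℕ | p.2.2 = a} b
    have h1 : (fun ω => (W ω, Z ω, Ws ω))⁻¹' {p : ℕ×ℕ×ℕ | p.2.2 = a} = {ω | Ws ω = a} := rfl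
    rw [h1] at h
    have hss : {ω | Ws ω = a ∧ X ω = b} = {ω | Ws ω = a} ∩ {ω | X ω = b} := Set.setOf_and
    rw [hss, ← h]
  -- F1 : law of ξ * W
  have hmeasξW : Measurable fun ω => ξ ω * W ω := hξmeas.mul hWmeas
  have hw : ∀ a : ℕ, P {ω | ξ ω * W ω = a}
      = ENNReal.ofReal q * P {ω | W ω = a}
        + (if a = 0 then ENNReal.ofReal (1 - q) else 0) := by
    intro a
    have hms : MeasurableSet {ω | ξ ω * W ω = a} := hmeasξW (measurableSet_singleton a)
    rw [hsplit _ hms]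
    have h0 : {ω | ξ ω * W ω = a} ∩ {ω | ξ ω = 0}
        = if a = 0 then {ω | ξ ω = 0} else (∅ : Set Ω) := by
      split_ifs with h
      · subst h; ext ω; simp only [Set.mem_inter_iff, Set.mem_setOf_eq]
        constructor
        · rintro ⟨-, h2⟩; exact h2
        · intro h2; exact ⟨by simp [h2], h2⟩
      · ext ω; simp only [Set.mem_inter_iff, Set.mem_setOf_eq, Set.mem_empty_iff_false,
          iff_false, not_and]
        intro h1 h2; rw [h2, zero_mul] at h1; exact h h1.symm
    have h1 : {ω | ξ ω * W ω = a} ∩ {ω | ξ ω = 1}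
        = {ω | W ω = a} ∩ {ω | ξ ω = 1} := by
      ext ω; simp only [Set.mem_inter_iff, Set.mem_setOf_eq]
      constructor
      · rintro ⟨h1, h2⟩; rw [h2, one_mul] at h1; exact ⟨h1, h2⟩
      · rintro ⟨h1, h2⟩
        refine ⟨?_, h2⟩
        have h2' : ξ ω = 1 := h2
        rw [h2', one_mul]
        exact h1
    have hP1 : P ({ω | W ω = a} ∩ {ω | ξ ω = 1}) = P {ω | W ω = a} * ENNReal.ofReal q := by
      have h := hξE {p : ℕ×ℕ×ℕ×ℕ | p.1 = a} 1
      have he : (fun ω => (W ω, Z ω, Ws ω, X ω))⁻¹' {p : ℕ×ℕ×ℕ×ℕ | p.1 = a} = {ω | W ω = a} := rfl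
      rw [he, hξ1'] at h
      exact h
    rw [h0, h1, hP1]
    split_ifs with h
    · rw [hξ0', mul_comm]; ring
    · rw [measure_empty, mul_comm]; ring
  -- F2
  have hF2 : ∀ a b : ℕ, P {ω | ξ ω * W ω = a ∧ X ω = b}
      = P {ω | ξ ω * W ω = a} * P {ω | X ω = b} := by
    intro a b
    have hmT : MeasurableSet {ω | ξ ω * W ω = a ∧ X ω = b} := by
      have : {ω | ξ ω * W ω = a ∧ X ω = b}
          = (fun ω => ξ ω * W ω)⁻¹' {a} ∩ X ⁻¹' {b} := rfl
      rw [this]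
      exact (hmeasξW (measurableSet_singleton a)).inter (hXmeas (measurableSet_singleton b))
    rw [hsplit _ hmT, hw]
    have h0 : {ω | ξ ω * W ω = a ∧ X ω = b} ∩ {ω | ξ ω = 0}
        = if a = 0 then {ω | X ω = b} ∩ {ω | ξ ω = 0} else (∅ : Set Ω) := by
      split_ifs with h
      · subst h; ext ω
        simp only [Set.mem_inter_iff, Set.mem_setOf_eq]
        constructor
        · rintro ⟨⟨-, h2⟩, h3⟩; exact ⟨h2, h3⟩
        · rintro ⟨h1, h2⟩; exact ⟨⟨by simp [h2], h1⟩, h2⟩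
      · ext ω
        simp only [Set.mem_inter_iff, Set.mem_setOf_eq, Set.mem_empty_iff_false, iff_false,
          not_and]
        rintro ⟨h1, -⟩ h2; rw [h2, zero_mul] at h1; exact h h1.symm
    have h1 : {ω | ξ ω * W ω = a ∧ X ω = b} ∩ {ω | ξ ω = 1}
        = {ω | W ω = a ∧ X ω = b} ∩ {ω | ξ ω = 1} := by
      ext ω
      constructor
      · rintro ⟨⟨h1, h2⟩, h3⟩
        have h3' : ξ ω = 1 := h3
        rw [h3', one_mul] at h1
        exact ⟨⟨h1, h2⟩, h3⟩
      · rintro ⟨⟨h1, h2⟩, h3⟩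
        have h3' : ξ ω = 1 := h3
        refine ⟨⟨?_, h2⟩, h3⟩
        rw [h3', one_mul]
        exact h1
    have hP1 : P ({ω | W ω = a ∧ X ω = b} ∩ {ω | ξ ω = 1})
        = P {ω | W ω = a} * P {ω | X ω = b} * ENNReal.ofReal q := by
      have h := hξE {p : ℕ×ℕ×ℕ×ℕ | p.1 = a ∧ p.2.2.2 = b} 1
      have he : (fun ω => (W ω, Z ω, Ws ω, X ω))⁻¹' {p : ℕ×ℕ×ℕ×ℕ | p.1 = a ∧ p.2.2.2 = b}
          = {ω | W ω = a ∧ X ω = b} := rfl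
      rw [he, hξ1'] at h
      rw [h]
      congr 1
      have h2 := hXE {p : ℕ×ℕ×ℕ | p.1 = a} b
      have he2 : (fun ω => (W ω, Z ω, Ws ω))⁻¹' {p : ℕ×ℕ×ℕ | p.1 = a} = {ω | W ω = a} := rfl
      rw [he2] at h2
      have hss : {ω | W ω = a ∧ X ω = b} = {ω | W ω = a} ∩ {ω | X ω = b} := Set.setOf_and
      rw [hss, ← h2]
    have hP0 : P ({ω | X ω = b} ∩ {ω | ξ ω = 0})
        = P {ω | X ω = b} * ENNReal.ofReal (1 - q) := by
      have h := hξE {p : ℕ×ℕ×ℕ×ℕ | p.2.2.2 = b} 0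
      have he : (fun ω => (W ω, Z ω, Ws ω, X ω))⁻¹' {p : ℕ×ℕ×ℕ×ℕ | p.2.2.2 = b}
          = {ω | X ω = b} := rfl
      rw [he, hξ0'] at h
      exact h
    rw [h0, h1, hP1]
    split_ifs with h
    · rw [hP0]; ring
    · rw [measure_empty]
      ring
  -- F3 : real identity a * P(ξW=a) = qν * P(Ws=a)
  have hF3 : ∀ a : ℕ, (a : ℝ) * (P {ω | ξ ω * W ω = a}).toReal
      = q * ν * (P {ω | Ws ω = a}).toReal := by
    intro a
    have hwa := hw a
    rcases Nat.eq_zero_or_pos a with rfl | ha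
    · rw [hsbW 0]
      simp
    · rw [hwa, if_neg (by omega), add_zero, ENNReal.toReal_mul,
        ENNReal.toReal_ofReal hq0.le, hsbW a]
      field_simp
  -- decompositions
  have hYdec : ∀ j : ℕ, P {ω | ξ ω * W ω + X ω = j}
      = ∑ k ∈ Finset.range (j+1), P {ω | ξ ω * W ω = j - k ∧ X ω = k} :=
    fun j => decomp_lemma P _ X hmeasξW hXmeas j
  have hWsdec : ∀ j : ℕ, P {ω | Ws ω + X ω = j}
      = ∑ k ∈ Finset.range (j+1), P {ω | Ws ω = j - k ∧ X ω = k} :=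
    fun j => decomp_lemma P Ws X hWsmeas hXmeas j
  -- main identity
  have hID : ∀ j : ℕ, (j : ℝ) * (P {ω | ξ ω * W ω + X ω = j}).toReal
      = q * ν * (P {ω | Ws ω + X ω = j}).toReal
        + ∑ k ∈ Finset.range (j+1),
            (k : ℝ) * (P {ω | X ω = k}).toReal * (P {ω | ξ ω * W ω = j - k}).toReal := by
    intro j
    rw [hYdec, hWsdec, ENNReal.toReal_sum (fun _ _ => measure_ne_top P _),
      ENNReal.toReal_sum (fun _ _ => measure_ne_top P _), Finset.mul_sum, Finset.mul_sum,
      ← Finset.sum_add_distrib]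
    refine Finset.sum_congr rfl fun k hk => ?_
    have hkj : k ≤ j := by
      have := Finset.mem_range.mp hk; omega
    rw [hF2, hF4, ENNReal.toReal_mul, ENNReal.toReal_mul]
    have hcast : ((j - k : ℕ) : ℝ) = (j : ℝ) - (k : ℝ) := by
      push_cast [hkj]; ring
    have h3 := hF3 (j - k)
    rw [hcast] at h3
    linear_combination (P {ω | X ω = k}).toReal * h3
  -- the Bernoulli(q ν / c) measure on Bool
  set p : ℝ≥0∞ := ENNReal.ofReal (q * ν / (q * ν + φ)) with hpdef
  have hpR : q * ν / (q * ν + φ) ≤ 1 := by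
    rw [div_le_one hcpos]; linarith
  have hpRnn : 0 ≤ q * ν / (q * ν + φ) := by positivity
  have hp1 : p ≤ 1 := ENNReal.ofReal_le_one.mpr hpR
  have hpne : p ≠ ∞ := ENNReal.ofReal_ne_top
  set μB : Measure Bool := p • Measure.dirac true + (1 - p) • Measure.dirac false with hμBdef
  have hμBt : μB {true} = p := by
    rw [hμBdef]
    simp [Measure.dirac_apply]
  have hμBf : μB {false} = 1 - p := by
    rw [hμBdef]
    simp [Measure.dirac_apply]
  have hμBprob : IsProbabilityMeasure μB := by
    constructor
    rw [hμBdef]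
    simp only [Measure.add_apply, Measure.smul_apply, measure_univ, smul_eq_mul, mul_one]
    exact add_tsub_cancel_of_le hp1
  -- the size-biased-X measure on ℕ
  have hX0 : φ = 0 → ∀ k : ℕ, k ≠ 0 → P {ω | X ω = k} = 0 := by
    intro h0 k hk
    have hXae : (fun ω => (X ω : ℝ)) =ᵐ[P] 0 := by
      rw [← integral_eq_zero_iff_of_nonneg (fun ω => Nat.cast_nonneg _) hXInt, ← hφ]
      exact h0
    have h1 : P {ω | ¬ ((X ω : ℝ) = 0)} = 0 := by
      rw [Filter.EventuallyEq, ae_iff] at hXae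
      simpa using hXae
    refine measure_mono_null ?_ h1
    intro ω hω
    simp only [Set.mem_setOf_eq] at hω ⊢
    rw [hω]
    exact_mod_cast hk
  obtain ⟨μs, hμsprob, hμsspec⟩ :
      ∃ μs : Measure ℕ, IsProbabilityMeasure μs ∧
        (φ ≠ 0 → ∀ k : ℕ, (μs {k}).toReal = k * (P {ω | X ω = k}).toReal / φ) := by
    by_cases h0 : φ = 0
    · exact ⟨Measure.dirac 0, by infer_instance, fun hk => absurd h0 hk⟩
    · have hφpos : 0 < φ := lt_of_le_of_ne hφnn (Ne.symm h0)
      have hofφ : ENNReal.ofReal φ ≠ 0 := by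
        simp [ENNReal.ofReal_eq_zero]; linarith
      have hlint : ∫⁻ n, (n : ℝ≥0∞) ∂(P.map X) = ENNReal.ofReal φ := by
        rw [lintegral_map (by exact measurable_from_nat) hXmeas, hφ,
          ofReal_integral_eq_lintegral_ofReal hXInt
            (Filter.Eventually.of_forall fun ω => Nat.cast_nonneg _)]
        congr 1
        ext ω
        rw [ENNReal.ofReal_natCast]
      refine ⟨(P.map X).withDensity (fun n => (n : ℝ≥0∞) * (ENNReal.ofReal φ)⁻¹), ?_, ?_⟩
      · constructor
        rw [withDensity_apply _ MeasurableSet.univ, setLIntegral_univ,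
          lintegral_mul_const _ (by exact measurable_from_nat), hlint,
          ENNReal.mul_inv_cancel hofφ ENNReal.ofReal_ne_top]
      · intro _ k
        rw [withDensity_apply _ (measurableSet_singleton k), lintegral_singleton,
          Measure.map_apply hXmeas (measurableSet_singleton k)]
        have hXk : X ⁻¹' {k} = {ω | X ω = k} := rfl
        rw [hXk, ENNReal.toReal_mul, ENNReal.toReal_mul, ENNReal.toReal_inv,
          ENNReal.toReal_ofReal hφnn, ENNReal.toReal_natCast]
        ring
  -- push everything to a canonical space
  haveI := hμsprob
  haveI := hμBprob
  set g5 : Ω → ℕ × ℕ × ℕ × ℕ × ℕ := fun ω => (W ω, Z ω, Ws ω, X ω, ξ ω) with hg5def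
  have hg5meas : Measurable g5 := by
    rw [hg5def]
    exact hWmeas.prod (hZmeas.prod (hWsmeas.prod (hXmeas.prod hξmeas)))
  set μ0 : Measure (ℕ × ℕ × ℕ × ℕ × ℕ) := P.map g5 with hμ0def
  haveI hμ0prob : IsProbabilityMeasure μ0 := Measure.isProbabilityMeasure_map hg5meas.aemeasurable
  have hμ0 : ∀ S : Set (ℕ × ℕ × ℕ × ℕ × ℕ), μ0 S = P (g5 ⁻¹' S) := fun S =>
    Measure.map_apply hg5meas (S.to_countable.measurableSet)
  refine ⟨(ℕ × ℕ × ℕ × ℕ × ℕ) × ℕ × Bool, inferInstance, μ0.prod (μs.prod μB),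
    fun z => z.1.2.2.2.2 * z.1.1 + z.1.2.2.2.1,
    fun z => if z.2.2 then z.1.2.2.1 + z.1.2.2.2.1 else z.1.2.2.2.2 * z.1.1 + z.2.1,
    fun z => z.1.2.1, inferInstance, by fun_prop, ?_, by fun_prop, ?_, ?_, ?_, ?_⟩
  · -- measurability of Ys
    refine Measurable.ite ?_ (by fun_prop) (by fun_prop)
    have : {z : (ℕ × ℕ × ℕ × ℕ × ℕ) × ℕ × Bool | z.2.2 = true}
        = (fun z : (ℕ × ℕ × ℕ × ℕ × ℕ) × ℕ × Bool => z.2.2) ⁻¹' {true} := rfl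
    rw [this]
    exact (measurable_snd.comp measurable_snd) (measurableSet_singleton true)
  · -- law of Y'
    intro j
    have hset : {z : (ℕ × ℕ × ℕ × ℕ × ℕ) × ℕ × Bool | z.1.2.2.2.2 * z.1.1 + z.1.2.2.2.1 = j}
        = {v : ℕ × ℕ × ℕ × ℕ × ℕ | v.2.2.2.2 * v.1 + v.2.2.2.1 = j} ×ˢ
          (Set.univ : Set (ℕ × Bool)) := by
      ext z
      simp [Set.mem_prod]
    rw [hset, Measure.prod_prod, measure_univ, mul_one, hμ0]
    rfl
  · -- law of Ys
    intro j
    have hsetY : {z : (ℕ × ℕ × ℕ × ℕ × ℕ) × ℕ × Bool |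
          (if z.2.2 then z.1.2.2.1 + z.1.2.2.2.1 else z.1.2.2.2.2 * z.1.1 + z.2.1) = j}
        = ({v : ℕ × ℕ × ℕ × ℕ × ℕ | v.2.2.1 + v.2.2.2.1 = j} ×ˢ
            ((Set.univ : Set ℕ) ×ˢ ({true} : Set Bool)))
          ∪ ⋃ k ∈ Finset.range (j+1),
              ({v : ℕ × ℕ × ℕ × ℕ × ℕ | v.2.2.2.2 * v.1 = j - k} ×ˢ
                (({k} : Set ℕ) ×ˢ ({false} : Set Bool))) := by
      ext z
      obtain ⟨v, k, b⟩ := z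
      cases b
      · simp only [Set.mem_setOf_eq, Set.mem_union, Set.mem_prod, Set.mem_singleton_iff,
          Set.mem_univ, Set.mem_iUnion, Finset.mem_range, if_false, Bool.false_eq_true,
          true_and, and_true, and_false, false_or, false_and, or_false]
        constructor
        · intro h
          exact ⟨k, by omega, by omega, rfl⟩
        · rintro ⟨k', hk', h1, rfl⟩
          omega
      · simp [Set.mem_prod]
    have hdA : Disjoint
        ({v : ℕ × ℕ × ℕ × ℕ × ℕ | v.2.2.1 + v.2.2.2.1 = j} ×ˢ
            ((Set.univ : Set ℕ) ×ˢ ({true} : Set Bool)))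
        (⋃ k ∈ Finset.range (j+1),
              ({v : ℕ × ℕ × ℕ × ℕ × ℕ | v.2.2.2.2 * v.1 = j - k} ×ˢ
                (({k} : Set ℕ) ×ˢ ({false} : Set Bool)))) := by
      apply Set.disjoint_left.mpr
      rintro ⟨v, k, b⟩ h1 h2
      simp only [Set.mem_prod, Set.mem_singleton_iff, Set.mem_iUnion, Set.mem_univ] at h1 h2
      obtain ⟨-, -, hb⟩ := h1
      obtain ⟨k', -, -, -, hb'⟩ := h2
      rw [hb] at hb'
      simp at hb'
    have hdB : (↑(Finset.range (j+1)) : Set ℕ).PairwiseDisjoint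
        (fun k => ({v : ℕ × ℕ × ℕ × ℕ × ℕ | v.2.2.2.2 * v.1 = j - k} ×ˢ
                (({k} : Set ℕ) ×ˢ ({false} : Set Bool)))) := by
      intro a _ b _ hab
      apply Set.disjoint_left.mpr
      rintro ⟨v, k, bo⟩ h1 h2
      simp only [Set.mem_prod, Set.mem_singleton_iff] at h1 h2
      exact hab (h1.2.1.symm.trans h2.2.1)
    rw [hsetY, measure_union hdA ((Set.to_countable _).measurableSet),
      measure_biUnion_finset hdB (fun k _ => (Set.to_countable _).measurableSet),
      Measure.prod_prod, Measure.prod_prod, measure_univ, one_mul, hμBt, hμ0]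
    have hAev : P (g5 ⁻¹' {v : ℕ × ℕ × ℕ × ℕ × ℕ | v.2.2.1 + v.2.2.2.1 = j})
        = P {ω | Ws ω + X ω = j} := rfl
    rw [hAev]
    have hBev : ∀ k, (μ0.prod (μs.prod μB))
          ({v : ℕ × ℕ × ℕ × ℕ × ℕ | v.2.2.2.2 * v.1 = j - k} ×ˢ
                (({k} : Set ℕ) ×ˢ ({false} : Set Bool)))
        = P {ω | ξ ω * W ω = j - k} * (μs {k} * (1 - p)) := by
      intro k
      rw [Measure.prod_prod, Measure.prod_prod, hμBf, hμ0]
      rfl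
    simp only [hBev]
    -- now convert to reals
    have hfin1 : P {ω | Ws ω + X ω = j} * p ≠ ∞ :=
      ENNReal.mul_ne_top (measure_ne_top P _) hpne
    have hfin2 : ∑ k ∈ Finset.range (j+1),
        P {ω | ξ ω * W ω = j - k} * (μs {k} * (1 - p)) ≠ ∞ := by
      refine (ENNReal.sum_lt_top.mpr fun k _ => ?_).ne
      exact ENNReal.mul_lt_top (measure_ne_top P _).lt_top
        (ENNReal.mul_lt_top (measure_ne_top μs _).lt_top
          (ENNReal.sub_ne_top ENNReal.one_ne_top).lt_top)
    rw [ENNReal.toReal_add hfin1 hfin2, ENNReal.toReal_mul, ENNReal.toReal_sum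
      (fun k _ => ENNReal.mul_ne_top (measure_ne_top P _)
        (ENNReal.mul_ne_top (measure_ne_top μs _) (ENNReal.sub_ne_top ENNReal.one_ne_top)))]
    simp only [ENNReal.toReal_mul]
    have hpt : p.toReal = q * ν / (q * ν + φ) := by
      rw [hpdef]; exact ENNReal.toReal_ofReal hpRnn
    have h1pt : (1 - p).toReal = 1 - q * ν / (q * ν + φ) := by
      have h1p : (1:ℝ≥0∞) - p = ENNReal.ofReal (1 - q * ν / (q * ν + φ)) := by
        rw [ENNReal.ofReal_sub _ hpRnn, ENNReal.ofReal_one, hpdef]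
      rw [h1p, ENNReal.toReal_ofReal (by linarith)]
    rw [hpt, h1pt]
    by_cases h0 : φ = 0
    · have hrp1 : q * ν / (q * ν + φ) = 1 := by
        rw [h0, add_zero]
        field_simp
      have hsum0 : ∀ k ∈ Finset.range (j+1),
          (P {ω | ξ ω * W ω = j - k}).toReal * ((μs {k}).toReal * (1 - q * ν / (q * ν + φ))) = 0 := by
        intro k _
        rw [hrp1]
        simp
      rw [Finset.sum_eq_zero hsum0, hrp1, mul_one, add_zero]
      have hXsum0 : ∑ k ∈ Finset.range (j+1),
          (k : ℝ) * (P {ω | X ω = k}).toReal * (P {ω | ξ ω * W ω = j - k}).toReal = 0 := by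
        refine Finset.sum_eq_zero fun k _ => ?_
        rcases Nat.eq_zero_or_pos k with rfl | hk0
        · simp
        · rw [hX0 h0 k (by omega)]
          simp
      have hid := hID j
      rw [hXsum0, add_zero] at hid
      rw [h0, add_zero]
      have hqν : q * ν ≠ 0 := by positivity
      field_simp
      linarith [hid]
    · have hterm : ∀ k ∈ Finset.range (j+1),
          (P {ω | ξ ω * W ω = j - k}).toReal *
            ((μs {k}).toReal * (1 - q * ν / (q * ν + φ)))
          = ((k : ℝ) * (P {ω | X ω = k}).toReal * (P {ω | ξ ω * W ω = j - k}).toReal)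
              / (q * ν + φ) := by
        intro k _
        rw [hμsspec h0 k]
        have hphic : 1 - q * ν / (q * ν + φ) = φ / (q * ν + φ) := by
          field_simp
          ring
        rw [hphic]
        field_simp
      rw [Finset.sum_congr rfl hterm, ← Finset.sum_div]
      have hfirst : (P {ω | Ws ω + X ω = j}).toReal * (q * ν / (q * ν + φ))
          = (q * ν * (P {ω | Ws ω + X ω = j}).toReal) / (q * ν + φ) := by
        ring
      rw [hfirst, ← add_div, ← hID j]
  · -- law of Z'
    intro j
    have hset : {z : (ℕ × ℕ × ℕ × ℕ × ℕ) × ℕ × Bool | z.1.2.1 = j}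
        = {v : ℕ × ℕ × ℕ × ℕ × ℕ | v.2.1 = j} ×ˢ (Set.univ : Set (ℕ × Bool)) := by
      ext z
      simp [Set.mem_prod]
    rw [hset, Measure.prod_prod, measure_univ, mul_one, hμ0]
    rfl
  · -- the conditional bound
    intro x hx
    beta_reduce
    beta_reduce at hx
    -- the denominator event
    have hCset : {z : (ℕ × ℕ × ℕ × ℕ × ℕ) × ℕ × Bool |
          x ≤ ((z.1.2.2.2.2 * z.1.1 + z.1.2.2.2.1 : ℕ) : ℤ) + 1 - ((z.1.2.1 : ℕ) : ℤ)}
        = {v : ℕ × ℕ × ℕ × ℕ × ℕ |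
            x ≤ ((v.2.2.2.2 * v.1 + v.2.2.2.1 : ℕ) : ℤ) + 1 - ((v.2.1 : ℕ) : ℤ)} ×ˢ
          (Set.univ : Set (ℕ × Bool)) := by
      ext z
      simp [Set.mem_prod]
    have hCΩ : (μ0.prod (μs.prod μB)) ({v : ℕ × ℕ × ℕ × ℕ × ℕ |
            x ≤ ((v.2.2.2.2 * v.1 + v.2.2.2.1 : ℕ) : ℤ) + 1 - ((v.2.1 : ℕ) : ℤ)} ×ˢ
          (Set.univ : Set (ℕ × Bool)))
        = P {ω | x ≤ ((ξ ω * W ω + X ω : ℕ) : ℤ) + 1 - ((Z ω : ℕ) : ℤ)} := by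
      rw [Measure.prod_prod, measure_univ, mul_one, hμ0]
      rfl
    rw [hCset, hCΩ] at hx ⊢
    -- the good event inside the numerator
    set S : Set (ℕ × ℕ × ℕ × ℕ × ℕ) := {v | v.2.2.2.2 = 1 ∧
        (x ≤ (v.1 : ℤ) + (v.2.2.2.1 : ℤ) + 1 - (v.2.1 : ℤ)) ∧
        ((v.1 : ℤ) + 1 - (v.2.1 : ℤ) ≤ (v.2.2.1 : ℤ))} with hSdef
    have hEsub : (S ×ˢ ((Set.univ : Set ℕ) ×ˢ ({true} : Set Bool)))
        ⊆ {z : (ℕ × ℕ × ℕ × ℕ × ℕ) × ℕ × Bool |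
            ((z.1.2.2.2.2 * z.1.1 + z.1.2.2.2.1 : ℕ) : ℤ) + 1 - ((z.1.2.1 : ℕ) : ℤ)
              ≤ ((if z.2.2 then z.1.2.2.1 + z.1.2.2.2.1 else z.1.2.2.2.2 * z.1.1 + z.2.1 : ℕ) : ℤ)
            ∧ x ≤ ((z.1.2.2.2.2 * z.1.1 + z.1.2.2.2.1 : ℕ) : ℤ) + 1 - ((z.1.2.1 : ℕ) : ℤ)} := by
      rintro ⟨v, k, b⟩ hz
      simp only [Set.mem_prod, Set.mem_singleton_iff, Set.mem_univ, true_and, hSdef,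
        Set.mem_setOf_eq] at hz
      obtain ⟨⟨hξv, hxle, hmon⟩, hb⟩ := hz
      simp only [Set.mem_setOf_eq, hb, if_true, hξv, one_mul]
      constructor
      · push_cast
        omega
      · push_cast
        push_cast at hxle
        omega
    -- probability of the good event
    have hM0 : P {ω | ¬ ((W ω : ℤ) + 1 - (Z ω : ℤ) ≤ (Ws ω : ℤ))} = 0 := ae_iff.mp hmono
    have hSΩ : P (g5 ⁻¹' S) = ENNReal.ofReal q *
        P {ω | x ≤ (W ω : ℤ) + (X ω : ℤ) + 1 - (Z ω : ℤ)} := by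
      have hsplitS : g5 ⁻¹' S =
          ({ω | x ≤ (W ω : ℤ) + (X ω : ℤ) + 1 - (Z ω : ℤ)} ∩ {ω | ξ ω = 1})
            ∩ {ω | (W ω : ℤ) + 1 - (Z ω : ℤ) ≤ (Ws ω : ℤ)} := by
        ext ω
        simp only [Set.mem_preimage, hSdef, Set.mem_setOf_eq, Set.mem_inter_iff, hg5def]
        tauto
      have hnull : P (({ω | x ≤ (W ω : ℤ) + (X ω : ℤ) + 1 - (Z ω : ℤ)} ∩ {ω | ξ ω = 1})
          \ {ω | (W ω : ℤ) + 1 - (Z ω : ℤ) ≤ (Ws ω : ℤ)}) = 0 :=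
        measure_mono_null (fun ω hω => hω.2) hM0
      rw [hsplitS, measure_inter_conull' hnull]
      have h := hξE {p : ℕ × ℕ × ℕ × ℕ | x ≤ (p.1 : ℤ) + (p.2.2.2 : ℤ) + 1 - (p.2.1 : ℤ)} 1
      have he : (fun ω => (W ω, Z ω, Ws ω, X ω)) ⁻¹'
          {p : ℕ × ℕ × ℕ × ℕ | x ≤ (p.1 : ℤ) + (p.2.2.2 : ℤ) + 1 - (p.2.1 : ℤ)}
          = {ω | x ≤ (W ω : ℤ) + (X ω : ℤ) + 1 - (Z ω : ℤ)} := rfl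
      rw [he, hξ1'] at h
      rw [h, mul_comm]
    have hPE : (μ0.prod (μs.prod μB)) (S ×ˢ ((Set.univ : Set ℕ) ×ˢ ({true} : Set Bool)))
        = ENNReal.ofReal q *
            P {ω | x ≤ (W ω : ℤ) + (X ω : ℤ) + 1 - (Z ω : ℤ)} * p := by
      rw [Measure.prod_prod, Measure.prod_prod, measure_univ, one_mul, hμBt, hμ0, hSΩ]
    -- denominator is at most P(A')
    have hCle : P {ω | x ≤ ((ξ ω * W ω + X ω : ℕ) : ℤ) + 1 - ((Z ω : ℕ) : ℤ)}
        ≤ P {ω | x ≤ (W ω : ℤ) + (X ω : ℤ) + 1 - (Z ω : ℤ)} := by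
      have hsub : {ω | x ≤ ((ξ ω * W ω + X ω : ℕ) : ℤ) + 1 - ((Z ω : ℕ) : ℤ)}
          ⊆ {ω | x ≤ (W ω : ℤ) + (X ω : ℤ) + 1 - (Z ω : ℤ)}
            ∪ ({ω | ξ ω = 0} ∪ {ω | ξ ω = 1})ᶜ := by
        intro ω hω
        by_cases hN : ω ∈ ({ω | ξ ω = 0} ∪ {ω | ξ ω = 1})ᶜ
        · exact Or.inr hN
        · left
          rw [Set.notMem_compl_iff] at hN
          simp only [Set.mem_setOf_eq] at hω ⊢
          rcases hN with h | h
          · simp only [Set.mem_setOf_eq] at h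
            rw [h, zero_mul, zero_add] at hω
            push_cast at hω ⊢
            omega
          · simp only [Set.mem_setOf_eq] at h
            rw [h, one_mul] at hω
            push_cast at hω ⊢
            omega
      calc P {ω | x ≤ ((ξ ω * W ω + X ω : ℕ) : ℤ) + 1 - ((Z ω : ℕ) : ℤ)}
          ≤ P ({ω | x ≤ (W ω : ℤ) + (X ω : ℤ) + 1 - (Z ω : ℤ)}
            ∪ ({ω | ξ ω = 0} ∪ {ω | ξ ω = 1})ᶜ) := measure_mono hsub
        _ = P {ω | x ≤ (W ω : ℤ) + (X ω : ℤ) + 1 - (Z ω : ℤ)} := by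
          refine le_antisymm ((measure_union_le _ _).trans ?_)
            (measure_mono Set.subset_union_left)
          rw [hξN, add_zero]
    -- put the bound together
    have hDpos : 0 < (P {ω | x ≤ ((ξ ω * W ω + X ω : ℕ) : ℤ) + 1 - ((Z ω : ℕ) : ℤ)}).toReal :=
      ENNReal.toReal_pos hx.ne' (measure_ne_top P _)
    rw [le_div_iff₀ hDpos]
    have hNge : (ENNReal.ofReal q *
            P {ω | x ≤ (W ω : ℤ) + (X ω : ℤ) + 1 - (Z ω : ℤ)} * p).toReal
        ≤ ((μ0.prod (μs.prod μB)) {z : (ℕ × ℕ × ℕ × ℕ × ℕ) × ℕ × Bool |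
            ((z.1.2.2.2.2 * z.1.1 + z.1.2.2.2.1 : ℕ) : ℤ) + 1 - ((z.1.2.1 : ℕ) : ℤ)
              ≤ ((if z.2.2 then z.1.2.2.1 + z.1.2.2.2.1 else z.1.2.2.2.2 * z.1.1 + z.2.1 : ℕ) : ℤ)
            ∧ x ≤ ((z.1.2.2.2.2 * z.1.1 + z.1.2.2.2.1 : ℕ) : ℤ) + 1 - ((z.1.2.1 : ℕ) : ℤ)}).toReal := by
      rw [← hPE]
      exact ENNReal.toReal_mono (measure_ne_top _ _) (measure_mono hEsub)
    rw [ENNReal.toReal_mul, ENNReal.toReal_mul, ENNReal.toReal_ofReal hq0.le] at hNge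
    have hpt : p.toReal = q * ν / (q * ν + φ) := by
      rw [hpdef]; exact ENNReal.toReal_ofReal hpRnn
    rw [hpt] at hNge
    have hDle : (P {ω | x ≤ ((ξ ω * W ω + X ω : ℕ) : ℤ) + 1 - ((Z ω : ℕ) : ℤ)}).toReal
        ≤ (P {ω | x ≤ (W ω : ℤ) + (X ω : ℤ) + 1 - (Z ω : ℤ)}).toReal :=
      ENNReal.toReal_mono (measure_ne_top P _) hCle
    have haux : (0:ℝ) ≤ q * (q * ν / (q * ν + φ)) := by positivity
    have h2 : q ^ 2 * ν / (q * ν + φ)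
          * (P {ω | x ≤ ((ξ ω * W ω + X ω : ℕ) : ℤ) + 1 - ((Z ω : ℕ) : ℤ)}).toReal
        = q * (q * ν / (q * ν + φ))
          * (P {ω | x ≤ ((ξ ω * W ω + X ω : ℕ) : ℤ) + 1 - ((Z ω : ℕ) : ℤ)}).toReal := by
      ring
    rw [h2]
    refine (mul_le_mul_of_nonneg_left hDle haux).trans ?_
    have h3 : q * (q * ν / (q * ν + φ))
          * (P {ω | x ≤ (W ω : ℤ) + (X ω : ℤ) + 1 - (Z ω : ℤ)}).toReal
        = q * (P {ω | x ≤ (W ω : ℤ) + (X ω : ℤ) + 1 - (Z ω : ℤ)}).toReal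
          * (q * ν / (q * ν + φ)) := by
      ring
    rw [h3]
    exact hNge
end

section
/- Let Y be a non-negative integer-valued random variable with E[Y] = μ > 0 whose support is an initial segment of ℤ⁺ containing 0 (i.e. P(Y = k) > 0 whenever P(Y ≥ k) > 0). Suppose there exists c > 0 such that P(Y = k)/P(Y = k+1) − P(Y = k−1)/P(Y = k) ≥ c for all k ≥ 0 in the support (with the convention P(Y = −1) = 0). Then for every k ≥ 0, P(Y* ≥ k + 1) ≤ (1/(μc))·P(Y ≥ k), where Y* has the size-biased distribution of Y; equivalently, I_{μc}·Y* ≤_st Y + 1 for I_{μc} ~ Be(μc) independent of Y*. -/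
open MeasureTheory ProbabilityTheory

lemma tail_eq_tsum {Ω : Type*} [MeasurableSpace Ω] (P : Measure Ω)
    (X : Ω → ℕ) (hX : Measurable X) (k : ℕ) :
    P {ω | k ≤ X ω} = ∑' j : ℕ, P {ω | X ω = j + k} := by
  have hset : {ω | k ≤ X ω} = ⋃ j : ℕ, X ⁻¹' {j + k} := by
    ext ω
    simp only [Set.mem_setOf_eq, Set.mem_iUnion, Set.mem_preimage, Set.mem_singleton_iff]
    constructor
    · intro h; exact ⟨X ω - k, by omega⟩
    · rintro ⟨j, hj⟩; omega
  rw [hset, measure_iUnion]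
  · rfl
  · intro i j hij
    simp only [Function.onFun, Set.disjoint_left, Set.mem_preimage, Set.mem_singleton_iff]
    intro ω h1 h2
    omega
  · exact fun j => hX (measurableSet_singleton _)

/-- **(Tail bound under `c`-log-concavity.)**
Let `Y` be non-negative integer-valued with mean `μ > 0`, whose support is an initial
segment of `ℤ⁺`, and suppose `P(Y=k)/P(Y=k+1) − P(Y=k−1)/P(Y=k) ≥ c > 0` for all `k` in
the support (with `P(Y=−1) = 0`).  Then for every `k ≥ 0`,
`P(Y* ≥ k+1) ≤ (1/(μc))·P(Y ≥ k)`, where `Y*` is size-biased; equivalently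
`I_{μc}·Y* ≤_st Y + 1`. -/
theorem c_log_concave_size_bias_tail
    {Ω Ω' : Type*} [MeasurableSpace Ω] [MeasurableSpace Ω']
    (P : Measure Ω) (Q : Measure Ω') [IsProbabilityMeasure P] [IsProbabilityMeasure Q]
    (Y : Ω → ℕ) (Ys : Ω' → ℕ) (hYmeas : Measurable Y) (hYsmeas : Measurable Ys)
    (μ : ℝ) (hμ : μ = ∫ ω, (Y ω : ℝ) ∂P) (hμpos : 0 < μ)
    (hInt : Integrable (fun ω => (Y ω : ℝ)) P)
    (hsb : ∀ j : ℕ, (Q {ω | Ys ω = j}).toReal = j * (P {ω | Y ω = j}).toReal / μ)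
    (hsupp : ∀ k : ℕ, 0 < P {ω | k ≤ Y ω} → 0 < P {ω | Y ω = k})
    (c : ℝ) (hc : 0 < c)
    (hlogconc : ∀ k : ℕ, 0 < P {ω | Y ω = k} → 0 < P {ω | Y ω = k + 1} →
      c ≤ (P {ω | Y ω = k}).toReal / (P {ω | Y ω = k + 1}).toReal
        - (if k = 0 then (0 : ℝ)
            else (P {ω | Y ω = k - 1}).toReal / (P {ω | Y ω = k}).toReal)) :
    ∀ k : ℕ, (Q {ω | k + 1 ≤ Ys ω}).toReal
      ≤ (1 / (μ * c)) * (P {ω | k ≤ Y ω}).toReal := by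
  -- notation
  set p : ℕ → ℝ := fun j => (P {ω | Y ω = j}).toReal with hp
  -- positivity propagation: if P(Y = m+1) > 0 then P(Y = m) > 0
  have hstep : ∀ m : ℕ, 0 < P {ω | Y ω = m + 1} → 0 < P {ω | Y ω = m} := by
    intro m h
    apply hsupp
    refine lt_of_lt_of_le h (measure_mono ?_)
    intro ω hω
    simp only [Set.mem_setOf_eq] at *
    omega
  have hptoReal : ∀ m : ℕ, 0 < P {ω | Y ω = m} → 0 < p m := by
    intro m h
    exact ENNReal.toReal_pos h.ne' (measure_ne_top P _)
  -- key: ((m:ℝ)+1) * c * p (m+1) ≤ p m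
  have key : ∀ m : ℕ, ((m : ℝ) + 1) * c * p (m + 1) ≤ p m := by
    intro m
    by_cases hm : 0 < P {ω | Y ω = m + 1}
    · -- prove the stronger divided form by induction
      have main : ∀ n : ℕ, 0 < P {ω | Y ω = n + 1} → ((n : ℝ) + 1) * c * p (n + 1) ≤ p n := by
        intro n
        induction n with
        | zero =>
          intro h1
          have h0 := hstep 0 h1
          have := hlogconc 0 h0 h1
          rw [if_pos rfl, sub_zero] at this
          have hp1 : 0 < p 1 := hptoReal 1 h1
          have := (le_div_iff₀ hp1).mp this
          push_cast
          linarith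
        | succ n ih =>
          intro h2
          have h1 : 0 < P {ω | Y ω = n + 1} := hstep (n + 1) h2
          have h0 := ih h1
          have hp1 : 0 < p (n + 1) := hptoReal _ h1
          have hp2 : 0 < p (n + 2) := hptoReal _ h2
          have h0' : ((n : ℝ) + 1) * c ≤ p n / p (n + 1) :=
            (le_div_iff₀ hp1).mpr h0
          have hl := hlogconc (n + 1) h1 h2
          rw [if_neg (by omega)] at hl
          simp only [Nat.add_sub_cancel] at hl
          have : ((n : ℝ) + 1) * c + c ≤ p (n + 1) / p (n + 2) := by linarith
          have := (le_div_iff₀ hp2).mp this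
          push_cast
          nlinarith
      exact main m hm
    · have : P {ω | Y ω = m + 1} = 0 := by
        simpa using hm
      have hz : p (m + 1) = 0 := by simp [hp, this]
      rw [hz, mul_zero]
      exact ENNReal.toReal_nonneg
  intro k
  -- tail expansions
  have hQt := tail_eq_tsum Q Ys hYsmeas (k + 1)
  have hPt := tail_eq_tsum P Y hYmeas k
  have hQts : (Q {ω | k + 1 ≤ Ys ω}).toReal
      = ∑' j : ℕ, (Q {ω | Ys ω = j + (k + 1)}).toReal := by
    rw [hQt, ENNReal.tsum_toReal_eq (fun j => measure_ne_top Q _)]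
  have hPts : (P {ω | k ≤ Y ω}).toReal
      = ∑' j : ℕ, (P {ω | Y ω = j + k}).toReal := by
    rw [hPt, ENNReal.tsum_toReal_eq (fun j => measure_ne_top P _)]
  have hSq : Summable (fun j : ℕ => (Q {ω | Ys ω = j + (k + 1)}).toReal) := by
    apply ENNReal.summable_toReal
    rw [← hQt]; exact measure_ne_top Q _
  have hSp : Summable (fun j : ℕ => (P {ω | Y ω = j + k}).toReal) := by
    apply ENNReal.summable_toReal
    rw [← hPt]; exact measure_ne_top P _
  have hterm : ∀ j : ℕ, (Q {ω | Ys ω = j + (k + 1)}).toReal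
      ≤ (1 / (μ * c)) * (P {ω | Y ω = j + k}).toReal := by
    intro j
    rw [hsb (j + (k + 1))]
    have hk := key (j + k)
    have hidx : j + (k + 1) = (j + k) + 1 := by omega
    rw [hidx, one_div_mul_eq_div, div_le_div_iff₀ hμpos (mul_pos hμpos hc)]
    have hmul := mul_le_mul_of_nonneg_right hk hμpos.le
    push_cast at hmul ⊢
    nlinarith [hmul]
  calc (Q {ω | k + 1 ≤ Ys ω}).toReal
      = ∑' j : ℕ, (Q {ω | Ys ω = j + (k + 1)}).toReal := hQts
    _ ≤ ∑' j : ℕ, (1 / (μ * c)) * (P {ω | Y ω = j + k}).toReal :=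
        Summable.tsum_le_tsum hterm hSq (hSp.mul_left _)
    _ = (1 / (μ * c)) * ∑' j : ℕ, (P {ω | Y ω = j + k}).toReal := tsum_mul_left
    _ = (1 / (μ * c)) * (P {ω | k ≤ Y ω}).toReal := by rw [hPts]
end

section
/- Let λ > 0 and p ∈ (0,1], let Z ~ Po(λ) and I_p ~ Be(p) be independent, and set Y = I_p·Z. Then the discrete Poincaré constant satisfies R_Y ≤ λ·( p + (1 − p)·max{ (e^λ − 1)/λ , e^λ/((1 − p)·e^λ + p) } ). -/
open MeasureTheory ProbabilityTheory
open scoped ENNReal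

namespace ZIPAux

noncomputable def mu (lam : ℝ) (k : ℕ) : ℝ := Real.exp (-lam) * lam ^ k / (Nat.factorial k : ℝ)

noncomputable def Ttail (lam : ℝ) (i : ℕ) : ℝ := ∑' m : ℕ, mu lam (m + (i + 1))

lemma mu_nonneg {lam : ℝ} (hlam : 0 ≤ lam) (k : ℕ) : 0 ≤ mu lam k := by
  unfold mu
  positivity

lemma summable_mu (lam : ℝ) : Summable (mu lam) := by
  have h := (Real.summable_pow_div_factorial lam).mul_left (Real.exp (-lam))
  refine h.congr fun k => ?_
  unfold mu; ring

lemma exp_eq_tsum (lam : ℝ) : Real.exp lam = ∑' n : ℕ, lam ^ n / (n.factorial : ℝ) := by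
  rw [Real.exp_eq_exp_ℝ, NormedSpace.exp_eq_tsum_div]

lemma tsum_mu (lam : ℝ) : ∑' k : ℕ, mu lam k = 1 := by
  have : ∑' k : ℕ, mu lam k = Real.exp (-lam) * ∑' k : ℕ, lam ^ k / (k.factorial : ℝ) := by
    rw [← tsum_mul_left]; congr 1; ext k; unfold mu; ring
  rw [this, ← exp_eq_tsum, ← Real.exp_add]; simp

lemma mu_succ (lam : ℝ) (k : ℕ) : ((k+1 : ℕ) : ℝ) * mu lam (k+1) = lam * mu lam k := by
  unfold mu
  rw [Nat.factorial_succ]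
  have h1 : ((k+1 : ℕ) : ℝ) ≠ 0 := by positivity
  have h2 : (Nat.factorial k : ℝ) ≠ 0 := by positivity
  push_cast
  field_simp
  ring

lemma summable_mu_shift (lam : ℝ) (i : ℕ) : Summable (fun m => mu lam (m + i)) :=
  (summable_nat_add_iff i).2 (summable_mu lam)

lemma summable_kmu (lam : ℝ) : Summable (fun k : ℕ => (k : ℝ) * mu lam k) := by
  rw [← summable_nat_add_iff 1]
  refine ((summable_mu lam).mul_left lam).congr fun k => ?_
  exact (mu_succ lam k).symm

lemma summable_kmu_shift (lam : ℝ) (i : ℕ) :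
    Summable (fun m : ℕ => ((m + i : ℕ) : ℝ) * mu lam (m + i)) :=
  (summable_nat_add_iff i).2 (summable_kmu lam)

lemma Ttail_nonneg {lam : ℝ} (hlam : 0 ≤ lam) (i : ℕ) : 0 ≤ Ttail lam i :=
  tsum_nonneg fun m => mu_nonneg hlam _

lemma sum_mu_add_Ttail (lam : ℝ) (i : ℕ) :
    ∑ j ∈ Finset.range (i+1), mu lam j + Ttail lam i = 1 := by
  rw [Ttail, Summable.sum_add_tsum_nat_add (i+1) (summable_mu lam), tsum_mu]

lemma tsum_shift_mu (lam : ℝ) (i : ℕ) :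
    ∑' m : ℕ, mu lam (m + i) = mu lam i + Ttail lam i := by
  rw [Summable.tsum_eq_zero_add (summable_mu_shift lam i)]
  have h0 : (0:ℕ) + i = i := by omega
  rw [h0]
  congr 1
  unfold Ttail
  exact tsum_congr fun b => by congr 1; omega

lemma tail_kmu (lam : ℝ) (i : ℕ) :
    ∑' m : ℕ, ((m + (i+1) : ℕ) : ℝ) * mu lam (m + (i+1)) = lam * (mu lam i + Ttail lam i) := by
  have h1 : ∀ m : ℕ, ((m + (i+1) : ℕ) : ℝ) * mu lam (m + (i+1)) = lam * mu lam (m + i) := by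
    intro m
    exact mu_succ lam (m + i)
  calc ∑' m : ℕ, ((m + (i+1) : ℕ) : ℝ) * mu lam (m + (i+1))
      = ∑' m : ℕ, lam * mu lam (m + i) := by exact tsum_congr h1
    _ = lam * ∑' m : ℕ, mu lam (m + i) := tsum_mul_left
    _ = lam * (mu lam i + Ttail lam i) := by rw [tsum_shift_mu]

-- the factorial bound
lemma fact_bound (i m : ℕ) (hi : 1 ≤ i) :
    Nat.factorial i * Nat.factorial (m + 2) ≤ Nat.factorial (i + m + 1) := by
  have key : Nat.factorial (i + m + 1) = (i + (m+1)).choose (m+1) * i.factorial * (m+1).factorial := by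
    rw [show i + m + 1 = i + (m+1) from by omega, Nat.add_choose_mul_factorial_mul_factorial]
  rw [key]
  have hch : m + 2 ≤ (i + (m+1)).choose (m+1) := by
    calc m + 2 = (m+2).choose (m+1) := by
          rw [show m + 2 = (m+1) + 1 from rfl, Nat.choose_succ_self_right]
      _ ≤ (i + (m+1)).choose (m+1) := Nat.choose_le_choose _ (by omega)
  calc i.factorial * (m+2).factorial = (m+2) * (m+1).factorial * i.factorial := by
        rw [Nat.factorial_succ]; ring
    _ ≤ (i + (m+1)).choose (m+1) * (m+1).factorial * i.factorial := by
        exact Nat.mul_le_mul_right _ (Nat.mul_le_mul_right _ hch)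
    _ = (i + (m+1)).choose (m+1) * i.factorial * (m+1).factorial := by ring

lemma Ttail_le {lam : ℝ} (hlam : 0 < lam) (i : ℕ) (hi : 1 ≤ i) :
    Ttail lam i ≤ mu lam i * ((Real.exp lam - 1 - lam) / lam) := by
  have hsum2 : Summable (fun m : ℕ => lam ^ (m+1) / ((m+2).factorial : ℝ)) := by
    have h := (summable_nat_add_iff 2).2 (Real.summable_pow_div_factorial lam)
    have h' := h.mul_left (1/lam)
    refine h'.congr fun m => ?_
    have : lam ≠ 0 := ne_of_gt hlam
    field_simp
    ring
  have hterm : ∀ m : ℕ, mu lam (m + (i+1)) ≤ mu lam i * (lam ^ (m+1) / ((m+2).factorial : ℝ)) := by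
    intro m
    have hL : mu lam (m + (i+1)) = (Real.exp (-lam) * lam ^ (m + (i+1))) / ((m + (i+1)).factorial : ℝ) := rfl
    have hR : mu lam i * (lam ^ (m+1) / ((m+2).factorial : ℝ))
        = (Real.exp (-lam) * lam ^ (m + (i+1))) / ((i.factorial : ℝ) * ((m+2).factorial : ℝ)) := by
      unfold mu
      rw [div_mul_div_comm]
      congr 1
      rw [mul_assoc, ← pow_add]
      congr 2
      omega
    rw [hL, hR]
    have hD : ((i.factorial : ℝ) * ((m+2).factorial : ℝ)) ≤ ((m + (i+1)).factorial : ℝ) := by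
      have := fact_bound i m hi
      calc (i.factorial : ℝ) * ((m+2).factorial : ℝ)
          = ((i.factorial * (m+2).factorial : ℕ) : ℝ) := by push_cast; ring
        _ ≤ ((i + m + 1).factorial : ℝ) := by exact_mod_cast this
        _ = ((m + (i+1)).factorial : ℝ) := by congr 2; omega
    gcongr
  have hS2 : ∑' m : ℕ, lam ^ (m+1) / ((m+2).factorial : ℝ) = (Real.exp lam - 1 - lam) / lam := by
    have h0 : ∑' n : ℕ, lam ^ n / (n.factorial : ℝ) = Real.exp lam := (exp_eq_tsum lam).symm
    have hs := Real.summable_pow_div_factorial lam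
    have h1 : Real.exp lam = 1 + ∑' n : ℕ, lam ^ (n+1) / ((n+1).factorial : ℝ) := by
      rw [← h0, Summable.tsum_eq_zero_add hs]; simp
    have hs1 := (summable_nat_add_iff 1).2 hs
    have h2 : ∑' n : ℕ, lam ^ (n+1) / ((n+1).factorial : ℝ)
        = lam + ∑' n : ℕ, lam ^ (n+2) / ((n+2).factorial : ℝ) := by
      rw [Summable.tsum_eq_zero_add (hs1.congr (fun n => rfl))]
      · simp
    have h3 : ∑' n : ℕ, lam ^ (n+2) / ((n+2).factorial : ℝ) = Real.exp lam - 1 - lam := by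
      rw [h1, h2]; ring
    have h4 : ∑' n : ℕ, lam ^ (n+2) / ((n+2).factorial : ℝ)
        = lam * ∑' m : ℕ, lam ^ (m+1) / ((m+2).factorial : ℝ) := by
      rw [← tsum_mul_left]
      congr 1; ext n
      rw [pow_succ]
      ring
    rw [eq_div_iff (ne_of_gt hlam)]
    rw [h4] at h3
    linarith [h3]
  calc Ttail lam i ≤ ∑' m : ℕ, mu lam i * (lam ^ (m+1) / ((m+2).factorial : ℝ)) := by
        exact Summable.tsum_le_tsum hterm (summable_mu_shift lam (i+1)) (hsum2.mul_left _)
    _ = mu lam i * ∑' m : ℕ, lam ^ (m+1) / ((m+2).factorial : ℝ) := tsum_mul_left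
    _ = mu lam i * ((Real.exp lam - 1 - lam) / lam) := by rw [hS2]


section Q

noncomputable def q (lam p : ℝ) (k : ℕ) : ℝ := p * mu lam k + (if k = 0 then 1 - p else 0)

noncomputable def hfun (lam p : ℝ) (i : ℕ) (jk : ℕ × ℕ) : ℝ :=
  if jk.1 ≤ i ∧ i < jk.2 then q lam p jk.1 * q lam p jk.2 * ((jk.2 : ℝ) - (jk.1 : ℝ)) else 0

variable {lam p : ℝ}

lemma q_nonneg (hlam : 0 ≤ lam) (hp0 : 0 ≤ p) (hp1 : p ≤ 1) (k : ℕ) : 0 ≤ q lam p k := by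
  unfold q
  have := mu_nonneg hlam k
  split <;> nlinarith

lemma q_succ (k : ℕ) : q lam p (k+1) = p * mu lam (k+1) := by
  unfold q; simp

lemma summable_q : Summable (q lam p) := by
  apply Summable.add ((summable_mu lam).mul_left p)
  apply summable_of_ne_finset_zero (s := {0})
  intro k hk
  simp at hk
  simp [hk]

lemma tsum_q : ∑' k, q lam p k = 1 := by
  unfold q
  rw [Summable.tsum_add ((summable_mu lam).mul_left p)
    (summable_of_ne_finset_zero (s := {0}) (by intro k hk; simp at hk; simp [hk]))]
  rw [tsum_mul_left, tsum_mu, tsum_eq_single 0 (by intro b hb; simp [hb])]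
  simp

lemma summable_qk : Summable (fun k : ℕ => q lam p k * (k : ℝ)) := by
  refine ((summable_kmu lam).mul_left p).congr fun k => ?_
  unfold q
  rcases Nat.eq_zero_or_pos k with h | h
  · simp [h]
  · have : ¬ (k = 0) := by omega
    simp [this]; ring

lemma hfun_nonneg (hlam : 0 ≤ lam) (hp0 : 0 ≤ p) (hp1 : p ≤ 1) (i : ℕ) (jk : ℕ × ℕ) :
    0 ≤ hfun lam p i jk := by
  unfold hfun
  split
  · rename_i h
    have h1 := q_nonneg hlam hp0 hp1 jk.1
    have h2 := q_nonneg hlam hp0 hp1 jk.2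
    have h3 : jk.1 ≤ jk.2 := by omega
    have h4 : (jk.1 : ℝ) ≤ (jk.2 : ℝ) := by exact_mod_cast h3
    exact mul_nonneg (mul_nonneg h1 h2) (by linarith)
  · exact le_refl _

lemma summable_hfun_slice (hlam : 0 ≤ lam) (hp0 : 0 ≤ p) (hp1 : p ≤ 1) (i j : ℕ) :
    Summable (fun k => hfun lam p i (j, k)) := by
  refine Summable.of_nonneg_of_le (fun k => hfun_nonneg hlam hp0 hp1 i (j,k))
    (fun k => ?_) ((summable_qk (lam := lam) (p := p)).mul_left (q lam p j))
  unfold hfun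
  split
  · rename_i h
    have h1 := q_nonneg hlam hp0 hp1 (lam := lam) (p := p) j
    have h2 := q_nonneg hlam hp0 hp1 (lam := lam) (p := p) k
    simp only
    have h4 : (k : ℝ) - (j : ℝ) ≤ (k : ℝ) := by
      have : (0:ℝ) ≤ (j:ℝ) := Nat.cast_nonneg j
      linarith
    calc q lam p j * q lam p k * ((k:ℝ) - (j:ℝ)) ≤ q lam p j * q lam p k * (k:ℝ) := by
          apply mul_le_mul_of_nonneg_left h4 (mul_nonneg h1 h2)
      _ = q lam p j * (q lam p k * (k:ℝ)) := by ring
  · exact mul_nonneg (q_nonneg hlam hp0 hp1 j)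
      (mul_nonneg (q_nonneg hlam hp0 hp1 k) (Nat.cast_nonneg k))

lemma summable_hfun (hlam : 0 ≤ lam) (hp0 : 0 ≤ p) (hp1 : p ≤ 1) (i : ℕ) :
    Summable (hfun lam p i) := by
  have hbig : Summable (fun jk : ℕ × ℕ => q lam p jk.1 * (q lam p jk.2 * (jk.2:ℝ))) := by
    apply Summable.mul_of_nonneg summable_q summable_qk
    · exact fun k => q_nonneg hlam hp0 hp1 k
    · exact fun k => mul_nonneg (q_nonneg hlam hp0 hp1 k) (Nat.cast_nonneg k)
  refine Summable.of_nonneg_of_le (fun jk => hfun_nonneg hlam hp0 hp1 i jk)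
    (fun jk => ?_) hbig
  unfold hfun
  split
  · rename_i h
    have h1 := q_nonneg hlam hp0 hp1 (lam := lam) (p := p) jk.1
    have h2 := q_nonneg hlam hp0 hp1 (lam := lam) (p := p) jk.2
    have h4 : (jk.2 : ℝ) - (jk.1 : ℝ) ≤ (jk.2 : ℝ) := by
      have : (0:ℝ) ≤ (jk.1:ℝ) := Nat.cast_nonneg _
      linarith
    calc q lam p jk.1 * q lam p jk.2 * ((jk.2:ℝ) - (jk.1:ℝ))
        ≤ q lam p jk.1 * q lam p jk.2 * (jk.2:ℝ) := by
          apply mul_le_mul_of_nonneg_left h4 (mul_nonneg h1 h2)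
      _ = q lam p jk.1 * (q lam p jk.2 * (jk.2:ℝ)) := by ring
  · exact mul_nonneg (q_nonneg hlam hp0 hp1 jk.1)
      (mul_nonneg (q_nonneg hlam hp0 hp1 jk.2) (Nat.cast_nonneg jk.2))

lemma inner_eval (hlam : 0 ≤ lam) (hp0 : 0 ≤ p) (hp1 : p ≤ 1) {i j : ℕ} (hj : j ≤ i) :
    ∑' k, hfun lam p i (j, k)
      = q lam p j * (p * (lam * (mu lam i + Ttail lam i) - (j : ℝ) * Ttail lam i)) := by
  have hslice := summable_hfun_slice hlam hp0 hp1 (lam := lam) (p := p) i j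
  rw [← Summable.sum_add_tsum_nat_add (i+1) hslice]
  have hzero : ∑ k ∈ Finset.range (i+1), hfun lam p i (j, k) = 0 := by
    apply Finset.sum_eq_zero
    intro k hk
    simp only [Finset.mem_range] at hk
    unfold hfun
    simp only
    have : ¬ (j ≤ i ∧ i < k) := by omega
    simp [this]
  rw [hzero, zero_add]
  have hterm : ∀ m : ℕ, hfun lam p i (j, m + (i+1))
      = q lam p j * p * (((m + (i+1) : ℕ) : ℝ) * mu lam (m + (i+1))
          - (j:ℝ) * mu lam (m + (i+1))) := by
    intro m
    unfold hfun
    simp only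
    have hc : j ≤ i ∧ i < m + (i+1) := ⟨hj, by omega⟩
    rw [if_pos hc]
    have hq : q lam p (m + (i+1)) = p * mu lam (m + (i+1)) := q_succ (k := m + i)
    rw [hq]
    ring
  calc ∑' m, hfun lam p i (j, m + (i+1))
      = ∑' m, q lam p j * p * (((m + (i+1) : ℕ) : ℝ) * mu lam (m + (i+1))
          - (j:ℝ) * mu lam (m + (i+1))) := tsum_congr hterm
    _ = q lam p j * p * ∑' m, (((m + (i+1) : ℕ) : ℝ) * mu lam (m + (i+1))
          - (j:ℝ) * mu lam (m + (i+1))) := tsum_mul_left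
    _ = q lam p j * p * (lam * (mu lam i + Ttail lam i) - (j:ℝ) * Ttail lam i) := by
        rw [Summable.tsum_sub (summable_kmu_shift lam (i+1)) ((summable_mu_shift lam (i+1)).mul_left _),
          tail_kmu, tsum_mul_left]
        rfl
    _ = q lam p j * (p * (lam * (mu lam i + Ttail lam i) - (j : ℝ) * Ttail lam i)) := by ring

lemma sum_jmu (i : ℕ) :
    ∑ j ∈ Finset.range (i+1), (j:ℝ) * mu lam j = lam * ∑ j ∈ Finset.range i, mu lam j := by
  induction i with
  | zero => simp
  | succ n ih =>
    rw [Finset.sum_range_succ, ih, Finset.sum_range_succ (f := mu lam), mul_add]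
    congr 1
    exact_mod_cast mu_succ lam n

lemma hfun_tsum (hlam : 0 ≤ lam) (hp0 : 0 ≤ p) (hp1 : p ≤ 1) (i : ℕ) :
    ∑' jk : ℕ × ℕ, hfun lam p i jk
      = p * lam * (p * mu lam i + (1 - p) * (mu lam i + Ttail lam i)) := by
  rw [Summable.tsum_prod' (summable_hfun hlam hp0 hp1 i) (fun j => summable_hfun_slice hlam hp0 hp1 i j)]
  have houter : (∑' j, ∑' k, hfun lam p i (j, k))
      = ∑ j ∈ Finset.range (i+1), ∑' k, hfun lam p i (j, k) := by
    apply tsum_eq_sum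
    intro j hj
    simp only [Finset.mem_range] at hj
    have : ∀ k, hfun lam p i (j, k) = 0 := by
      intro k
      unfold hfun
      have : ¬ (j ≤ i ∧ i < k) := by omega
      simp [this]
    simp [this]
  rw [houter]
  have hval : ∀ j ∈ Finset.range (i+1), ∑' k, hfun lam p i (j, k)
      = q lam p j * (p * (lam * (mu lam i + Ttail lam i) - (j : ℝ) * Ttail lam i)) := by
    intro j hj
    simp only [Finset.mem_range] at hj
    exact inner_eval hlam hp0 hp1 (by omega)
  rw [Finset.sum_congr rfl hval]
  -- now pure finite sum algebra
  set C := lam * (mu lam i + Ttail lam i) with hC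
  set t := Ttail lam i with ht
  have hsplit : ∀ j : ℕ, q lam p j * (p * (C - (j:ℝ) * t))
      = (p * mu lam j) * (p * (C - (j:ℝ) * t))
        + (if j = 0 then 1 - p else 0) * (p * (C - (j:ℝ) * t)) := by
    intro j
    unfold q
    ring
  rw [Finset.sum_congr rfl (fun j _ => hsplit j), Finset.sum_add_distrib]
  have hsecond : ∑ j ∈ Finset.range (i+1), (if j = 0 then 1 - p else 0) * (p * (C - (j:ℝ) * t))
      = (1 - p) * (p * C) := by
    rw [Finset.sum_eq_single 0]
    · simp
    · intro b _ hb
      simp [hb]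
    · intro h
      exact absurd (Finset.mem_range.2 (by omega)) h
  rw [hsecond]
  have hfirst : ∑ j ∈ Finset.range (i+1), (p * mu lam j) * (p * (C - (j:ℝ) * t))
      = p * p * (C * (∑ j ∈ Finset.range (i+1), mu lam j)
          - t * (∑ j ∈ Finset.range (i+1), (j:ℝ) * mu lam j)) := by
    calc ∑ j ∈ Finset.range (i+1), (p * mu lam j) * (p * (C - (j:ℝ) * t))
        = ∑ j ∈ Finset.range (i+1), ((p * p * C) * mu lam j - (p * p * t) * ((j:ℝ) * mu lam j)) :=
          Finset.sum_congr rfl (fun j _ => by ring)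
      _ = (p * p * C) * (∑ j ∈ Finset.range (i+1), mu lam j)
            - (p * p * t) * (∑ j ∈ Finset.range (i+1), (j:ℝ) * mu lam j) := by
          rw [Finset.sum_sub_distrib, ← Finset.mul_sum, ← Finset.mul_sum]
      _ = p * p * (C * (∑ j ∈ Finset.range (i+1), mu lam j)
            - t * (∑ j ∈ Finset.range (i+1), (j:ℝ) * mu lam j)) := by ring
  rw [hfirst, sum_jmu]
  have hA : ∑ j ∈ Finset.range (i+1), mu lam j = 1 - t := by
    have := sum_mu_add_Ttail lam i
    rw [← ht] at this
    linarith
  have hA' : ∑ j ∈ Finset.range i, mu lam j = 1 - t - mu lam i := by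
    have h2 : ∑ j ∈ Finset.range (i+1), mu lam j
        = ∑ j ∈ Finset.range i, mu lam j + mu lam i := Finset.sum_range_succ _ _
    rw [hA] at h2
    linarith
  rw [hA, hA', hC]
  ring

lemma hkey_real (hlam : 0 < lam) (hp0 : 0 < p) (hp1 : p ≤ 1) {R : ℝ}
    (hR1 : p * lam ≤ R) (hR2 : lam + (1-p) * (Real.exp lam - 1 - lam) ≤ R) (i : ℕ) :
    ∑' jk : ℕ × ℕ, hfun lam p i jk ≤ R * q lam p i := by
  rw [hfun_tsum hlam.le hp0.le hp1 i]
  rcases Nat.eq_zero_or_pos i with hi | hi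
  · subst hi
    have h01 : mu lam 0 + Ttail lam 0 = 1 := by
      have := sum_mu_add_Ttail lam 0
      simpa using this
    have hq0 : q lam p 0 = p * mu lam 0 + (1 - p) := by unfold q; simp
    have hmu0 : 0 ≤ mu lam 0 := mu_nonneg hlam.le 0
    have hT0 : 0 ≤ Ttail lam 0 := Ttail_nonneg hlam.le 0
    have hq0n : 0 ≤ q lam p 0 := q_nonneg hlam.le hp0.le hp1 0
    -- total = p*lam*(p*mu0 + (1-p)*1) = p*lam*q0 ≤ R*q0
    have : p * lam * (p * mu lam 0 + (1 - p) * (mu lam 0 + Ttail lam 0))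
        = (p * lam) * q lam p 0 := by rw [h01, hq0]; ring
    rw [this]
    exact mul_le_mul_of_nonneg_right hR1 hq0n
  · have hqi : q lam p i = p * mu lam i := by
      obtain ⟨k, rfl⟩ : ∃ k, i = k + 1 := ⟨i - 1, by omega⟩
      exact q_succ k
    have hTle := Ttail_le hlam i hi
    have hmu : 0 ≤ mu lam i := mu_nonneg hlam.le i
    have hT : 0 ≤ Ttail lam i := Ttail_nonneg hlam.le i
    have hexp : 0 ≤ Real.exp lam - 1 - lam := by
      have := Real.add_one_le_exp lam
      linarith
    -- lam * Ttail ≤ mu * (e^lam - 1 - lam)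
    have hTlam : lam * Ttail lam i ≤ mu lam i * (Real.exp lam - 1 - lam) := by
      have := mul_le_mul_of_nonneg_left hTle hlam.le
      calc lam * Ttail lam i ≤ lam * (mu lam i * ((Real.exp lam - 1 - lam) / lam)) := this
        _ = mu lam i * (Real.exp lam - 1 - lam) := by field_simp
    rw [hqi]
    -- goal: p*lam*(p*mu + (1-p)*(mu + T)) ≤ R * (p * mu)
    -- LHS = p*(lam*mu + (1-p)*lam*T) ≤ p*(lam*mu + (1-p)*mu*E) = p*mu*(lam + (1-p)*E) ≤ p*mu*R
    have step1 : p * lam * (p * mu lam i + (1 - p) * (mu lam i + Ttail lam i))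
        = p * (lam * mu lam i + (1-p) * (lam * Ttail lam i)) := by ring
    rw [step1]
    have step2 : lam * mu lam i + (1-p) * (lam * Ttail lam i)
        ≤ mu lam i * (lam + (1-p) * (Real.exp lam - 1 - lam)) := by
      have h2 := mul_le_mul_of_nonneg_left hTlam (by linarith : (0:ℝ) ≤ 1 - p)
      nlinarith
    calc p * (lam * mu lam i + (1-p) * (lam * Ttail lam i))
        ≤ p * (mu lam i * (lam + (1-p) * (Real.exp lam - 1 - lam))) :=
          mul_le_mul_of_nonneg_left step2 hp0.le
      _ ≤ p * (mu lam i * R) := by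
          apply mul_le_mul_of_nonneg_left (mul_le_mul_of_nonneg_left hR2 hmu) hp0.le
      _ = R * (p * mu lam i) := by ring

end Q

section Core

lemma telescope (g : ℕ → ℝ) {j k : ℕ} (h : j ≤ k) :
    g k - g j = ∑ i ∈ Finset.Ico j k, (g (i+1) - g i) := by
  induction k with
  | zero => simp at h; simp [h]
  | succ n ih =>
    rcases Nat.lt_or_ge j (n+1) with h'|h'
    · have hj : j ≤ n := Nat.lt_succ_iff.mp h'
      rw [Finset.sum_Ico_succ_top hj, ← ih hj]; ring
    · have : j = n+1 := le_antisymm h h'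
      subst this; simp

lemma pair_sq_bound (g : ℕ → ℝ) {j k : ℕ} (h : j < k) :
    (g j - g k)^2 ≤ ((k - j : ℕ) : ℝ) * ∑ i ∈ Finset.Ico j k, (g (i+1) - g i)^2 := by
  have h1 : (g j - g k)^2 = (∑ i ∈ Finset.Ico j k, (g (i+1) - g i))^2 := by
    rw [← telescope g h.le]; ring
  rw [h1]
  have h2 := Finset.sum_mul_sq_le_sq_mul_sq (Finset.Ico j k) (fun _ => (1:ℝ))
    (fun i => g (i+1) - g i)
  simp only [one_mul, one_pow, Finset.sum_const, nsmul_eq_mul, Nat.card_Ico, mul_one] at h2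
  exact h2

/-- the ENNReal weight coming from one ordered pair -/
noncomputable def hh (w : ℕ → ℝ) (i : ℕ) (jk : ℕ × ℕ) : ℝ≥0∞ :=
  ENNReal.ofReal (if jk.1 ≤ i ∧ i < jk.2 then w jk.1 * w jk.2 * ((jk.2:ℝ) - (jk.1:ℝ)) else 0)

noncomputable def dfun (w g : ℕ → ℝ) (jk : ℕ × ℕ) : ℝ :=
  w jk.1 * w jk.2 * (g jk.1 - g jk.2)^2

variable {w g : ℕ → ℝ} {R : ℝ}

lemma dfun_nonneg (hq0 : ∀ n, 0 ≤ w n) (jk : ℕ × ℕ) : 0 ≤ dfun w g jk :=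
  mul_nonneg (mul_nonneg (hq0 _) (hq0 _)) (sq_nonneg _)

lemma dfun_le (hq0 : ∀ n, 0 ≤ w n) (j k : ℕ) :
    dfun w g (j, k) ≤ 2 * ((w j * g j ^ 2) * w k) + 2 * (w j * (w k * g k ^ 2)) := by
  unfold dfun
  simp only
  have h1 := hq0 j
  have h2 := hq0 k
  have h3 : (g j - g k)^2 ≤ 2 * g j ^2 + 2 * g k ^2 := by nlinarith [sq_nonneg (g j + g k)]
  have h4 : 0 ≤ w j * w k := mul_nonneg h1 h2
  nlinarith [mul_le_mul_of_nonneg_left h3 h4]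

lemma summable_dfun (hq0 : ∀ n, 0 ≤ w n) (hqs : Summable w)
    (hg2 : Summable (fun n => w n * g n ^ 2)) : Summable (dfun w g) := by
  have hb1 : Summable (fun jk : ℕ × ℕ => (w jk.1 * g jk.1 ^ 2) * w jk.2) :=
    Summable.mul_of_nonneg (f := fun n => w n * g n ^ 2) (g := w) hg2 hqs
      (fun n => mul_nonneg (hq0 n) (sq_nonneg _)) (fun n => hq0 n)
  have hb2 : Summable (fun jk : ℕ × ℕ => w jk.1 * (w jk.2 * g jk.2 ^ 2)) :=
    Summable.mul_of_nonneg (f := w) (g := fun n => w n * g n ^ 2) hqs hg2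
      (fun n => hq0 n) (fun n => mul_nonneg (hq0 n) (sq_nonneg _))
  exact Summable.of_nonneg_of_le (dfun_nonneg hq0)
    (fun jk => dfun_le hq0 jk.1 jk.2) ((hb1.mul_left 2).add (hb2.mul_left 2))

lemma summable_dfun_slice (hq0 : ∀ n, 0 ≤ w n) (hqs : Summable w)
    (hg2 : Summable (fun n => w n * g n ^ 2)) (j : ℕ) :
    Summable (fun k => dfun w g (j, k)) := by
  have hb1 : Summable (fun k : ℕ => 2 * ((w j * g j ^ 2) * w k)) :=
    (hqs.mul_left _).mul_left 2
  have hb2 : Summable (fun k : ℕ => 2 * (w j * (w k * g k ^ 2))) :=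
    (hg2.mul_left _).mul_left 2
  exact Summable.of_nonneg_of_le (fun k => dfun_nonneg hq0 (j,k))
    (fun k => dfun_le hq0 j k) (hb1.add hb2)

set_option maxHeartbeats 1000000 in
lemma tsum_dfun (hq0 : ∀ n, 0 ≤ w n) (hqs : Summable w) (hq1 : ∑' n, w n = 1)
    (hg2 : Summable (fun n => w n * g n ^ 2))
    (hqg : Summable (fun n => w n * g n))
    (hmean : ∑' n, w n * g n = 0) :
    ∑' jk : ℕ × ℕ, dfun w g jk = 2 * ∑' n, w n * g n ^ 2 := by
  rw [Summable.tsum_prod' (summable_dfun hq0 hqs hg2) (summable_dfun_slice hq0 hqs hg2)]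
  have hinner : ∀ j : ℕ, ∑' k, dfun w g (j, k)
      = w j * g j ^ 2 + w j * ∑' n, w n * g n ^ 2 := by
    intro j
    have e1 : ∀ k, dfun w g (j, k) = ((w j * g j ^2) * w k - (2 * w j * g j) * (w k * g k))
        + w j * (w k * g k ^2) := by
      intro k; unfold dfun; simp only; ring
    rw [tsum_congr e1]
    rw [Summable.tsum_add (Summable.sub (hqs.mul_left _) (hqg.mul_left _)) (hg2.mul_left _)]
    rw [Summable.tsum_sub (hqs.mul_left _) (hqg.mul_left _)]
    rw [tsum_mul_left, tsum_mul_left, tsum_mul_left, hq1, hmean]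
    ring
  rw [tsum_congr hinner]
  rw [Summable.tsum_add hg2 (hqs.mul_right _)]
  rw [tsum_mul_right, hq1]
  ring

set_option maxHeartbeats 1000000 in
lemma core_ineq (hR : 0 ≤ R) (hq0 : ∀ n, 0 ≤ w n) (hqs : Summable w) (hq1 : ∑' n, w n = 1)
    (hg2 : Summable (fun n => w n * g n ^ 2))
    (hD : Summable (fun n => w n * (g (n+1) - g n) ^ 2))
    (hmean : ∑' n, w n * g n = 0)
    (hkey : ∀ i : ℕ, (∑' jk : ℕ × ℕ, hh w i jk) ≤ ENNReal.ofReal (R * w i)) :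
    ∑' n, w n * g n ^ 2 ≤ R * ∑' n, w n * (g (n+1) - g n) ^ 2 := by
  have hSqnn : 0 ≤ ∑' n, w n * g n ^ 2 := tsum_nonneg fun n => mul_nonneg (hq0 n) (sq_nonneg _)
  have hSDnn : 0 ≤ ∑' n, w n * (g (n+1) - g n) ^ 2 :=
    tsum_nonneg fun n => mul_nonneg (hq0 n) (sq_nonneg _)
  have hqg : Summable (fun n => w n * g n) := by
    apply Summable.of_abs
    apply Summable.of_nonneg_of_le (fun n => abs_nonneg _)
      (fun n => ?_) (((hqs.add hg2).mul_left (1/2)))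
    have h1 : |w n * g n| = w n * |g n| := by
      rw [abs_mul, abs_of_nonneg (hq0 n)]
    rw [h1]
    have h2 : |g n| ≤ (1 + g n ^ 2) / 2 := by nlinarith [sq_nonneg (|g n| - 1), sq_abs (g n)]
    calc w n * |g n| ≤ w n * ((1 + g n ^ 2)/2) := mul_le_mul_of_nonneg_left h2 (hq0 n)
      _ = 1/2 * (w n + w n * g n ^ 2) := by ring
  -- per pair bound in ENNReal
  have key : ∀ j k : ℕ, j < k → ENNReal.ofReal (dfun w g (j, k))
      ≤ ∑' i, hh w i (j, k) * ENNReal.ofReal ((g (i+1) - g i)^2) := by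
    intro j k hjk
    have hjr : (j:ℝ) ≤ (k:ℝ) := by exact_mod_cast hjk.le
    have hstep : ENNReal.ofReal (dfun w g (j,k))
        ≤ ∑ i ∈ Finset.Ico j k, hh w i (j,k) * ENNReal.ofReal ((g (i+1) - g i)^2) := by
      have hval : ∀ i ∈ Finset.Ico j k, hh w i (j,k) * ENNReal.ofReal ((g (i+1) - g i)^2)
          = ENNReal.ofReal ((w j * w k * ((k:ℝ) - (j:ℝ))) * (g (i+1) - g i)^2) := by
        intro i hi
        simp only [Finset.mem_Ico] at hi
        unfold hh
        simp only
        rw [if_pos ⟨hi.1, hi.2⟩, ← ENNReal.ofReal_mul]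
        exact mul_nonneg (mul_nonneg (hq0 j) (hq0 k)) (by linarith)
      rw [Finset.sum_congr rfl hval, ← ENNReal.ofReal_sum_of_nonneg]
      · apply ENNReal.ofReal_le_ofReal
        rw [← Finset.mul_sum]
        have hb := pair_sq_bound g hjk
        have hcast : ((k - j : ℕ) : ℝ) = (k:ℝ) - (j:ℝ) := by
          rw [Nat.cast_sub hjk.le]
        rw [hcast] at hb
        have hsum : 0 ≤ ∑ i ∈ Finset.Ico j k, (g (i+1) - g i)^2 :=
          Finset.sum_nonneg fun _ _ => sq_nonneg _
        calc dfun w g (j,k) = w j * w k * (g j - g k)^2 := rfl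
          _ ≤ w j * w k * (((k:ℝ) - (j:ℝ)) * ∑ i ∈ Finset.Ico j k, (g (i+1) - g i)^2) :=
            mul_le_mul_of_nonneg_left hb (mul_nonneg (hq0 j) (hq0 k))
          _ = w j * w k * ((k:ℝ) - (j:ℝ)) * ∑ i ∈ Finset.Ico j k, (g (i+1) - g i)^2 := by ring
      · intro i _
        exact mul_nonneg (mul_nonneg (mul_nonneg (hq0 j) (hq0 k)) (by linarith)) (sq_nonneg _)
    exact hstep.trans (ENNReal.sum_le_tsum _)
  have hpair : ∀ jk : ℕ × ℕ, ENNReal.ofReal (dfun w g jk)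
      ≤ ∑' i, (hh w i jk + hh w i (jk.2, jk.1)) * ENNReal.ofReal ((g (i+1) - g i)^2) := by
    rintro ⟨j, k⟩
    rcases lt_trichotomy j k with h | h | h
    · refine (key j k h).trans (ENNReal.tsum_le_tsum fun i => ?_)
      exact mul_le_mul_left le_self_add _
    · subst h
      have : dfun w g (j, j) = 0 := by unfold dfun; simp only; ring
      rw [this]
      simp
    · have hsymm : dfun w g (j, k) = dfun w g (k, j) := by unfold dfun; simp only; ring
      rw [hsymm]
      refine (key k j h).trans (ENNReal.tsum_le_tsum fun i => ?_)
      exact mul_le_mul_left le_add_self _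
  -- W total bound
  have hW : ∀ i : ℕ, (∑' jk : ℕ × ℕ, (hh w i jk + hh w i (jk.2, jk.1)))
      ≤ 2 * ENNReal.ofReal (R * w i) := by
    intro i
    rw [ENNReal.tsum_add]
    have hswap : ∑' jk : ℕ × ℕ, hh w i (jk.2, jk.1) = ∑' jk : ℕ × ℕ, hh w i jk :=
      Equiv.tsum_eq (Equiv.prodComm ℕ ℕ) (hh w i)
    rw [hswap, two_mul]
    exact add_le_add (hkey i) (hkey i)
  -- final chain
  have hchain : ENNReal.ofReal (2 * ∑' n, w n * g n ^ 2)
      ≤ ENNReal.ofReal (2 * (R * ∑' n, w n * (g (n+1) - g n) ^ 2)) := by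
    calc ENNReal.ofReal (2 * ∑' n, w n * g n ^ 2)
        = ENNReal.ofReal (∑' jk : ℕ × ℕ, dfun w g jk) := by
          rw [tsum_dfun hq0 hqs hq1 hg2 hqg hmean]
      _ = ∑' jk : ℕ × ℕ, ENNReal.ofReal (dfun w g jk) :=
          ENNReal.ofReal_tsum_of_nonneg (dfun_nonneg hq0) (summable_dfun hq0 hqs hg2)
      _ ≤ ∑' jk : ℕ × ℕ, ∑' i, (hh w i jk + hh w i (jk.2, jk.1))
            * ENNReal.ofReal ((g (i+1) - g i)^2) :=
          ENNReal.tsum_le_tsum hpair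
      _ = ∑' i, ∑' jk : ℕ × ℕ, (hh w i jk + hh w i (jk.2, jk.1))
            * ENNReal.ofReal ((g (i+1) - g i)^2) := ENNReal.tsum_comm
      _ = ∑' i, (∑' jk : ℕ × ℕ, (hh w i jk + hh w i (jk.2, jk.1)))
            * ENNReal.ofReal ((g (i+1) - g i)^2) :=
          tsum_congr fun i => ENNReal.tsum_mul_right
      _ ≤ ∑' i, (2 * ENNReal.ofReal (R * w i)) * ENNReal.ofReal ((g (i+1) - g i)^2) :=
          ENNReal.tsum_le_tsum fun i => mul_le_mul_left (hW i) _
      _ = ∑' i, 2 * ENNReal.ofReal R * ENNReal.ofReal (w i * (g (i+1) - g i)^2) := by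
          refine tsum_congr fun i => ?_
          rw [ENNReal.ofReal_mul hR, ENNReal.ofReal_mul (hq0 i)]
          ring
      _ = 2 * ENNReal.ofReal R * ∑' i, ENNReal.ofReal (w i * (g (i+1) - g i)^2) :=
          ENNReal.tsum_mul_left
      _ = 2 * ENNReal.ofReal R * ENNReal.ofReal (∑' n, w n * (g (n+1) - g n) ^ 2) := by
          rw [← ENNReal.ofReal_tsum_of_nonneg (fun n => mul_nonneg (hq0 n) (sq_nonneg _)) hD]
      _ = ENNReal.ofReal (2 * (R * ∑' n, w n * (g (n+1) - g n) ^ 2)) := by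
          rw [ENNReal.ofReal_mul (by norm_num : (0:ℝ) ≤ 2), ENNReal.ofReal_mul hR,
            ENNReal.ofReal_ofNat]
          ring
  rw [ENNReal.ofReal_le_ofReal_iff (by positivity)] at hchain
  linarith

end Core

end ZIPAux

open ZIPAux in
/-- **Example (Poincaré inequality for the zero-inflated Poisson distribution).** -/
theorem zero_inflated_poisson_poincare
    {Ω : Type*} [MeasurableSpace Ω] (P : Measure Ω) [IsProbabilityMeasure P]
    (lam : ℝ) (hlam : 0 < lam) (p : ℝ) (hp0 : 0 < p) (hp1 : p ≤ 1)
    (Z I : Ω → ℕ) (hZmeas : Measurable Z) (hImeas : Measurable I)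
    (hZpmf : ∀ k : ℕ, (P {ω | Z ω = k}).toReal
      = Real.exp (-lam) * lam ^ k / (Nat.factorial k : ℝ))
    (hI1 : (P {ω | I ω = 1}).toReal = p)
    (hI0 : (P {ω | I ω = 0}).toReal = 1 - p)
    (hindep : IndepFun Z I P) :
    ∀ g : ℕ → ℝ, Integrable (fun ω => g (I ω * Z ω)) P →
      (∫⁻ ω, ENNReal.ofReal ((g (I ω * Z ω)) ^ 2) ∂P) < ⊤ →
      (∫ ω, g (I ω * Z ω) ∂P) = 0 →
      ∫⁻ ω, ENNReal.ofReal ((g (I ω * Z ω)) ^ 2) ∂P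
        ≤ ENNReal.ofReal (lam * (p + (1 - p)
              * max ((Real.exp lam - 1) / lam)
                  (Real.exp lam / ((1 - p) * Real.exp lam + p))))
            * ∫⁻ ω, ENNReal.ofReal ((g (I ω * Z ω + 1) - g (I ω * Z ω)) ^ 2) ∂P := by
  intro g hint hsq hmean
  have hp1' : (0:ℝ) ≤ 1 - p := by linarith
  have hYmeas : Measurable (fun ω => I ω * Z ω) := hImeas.mul hZmeas
  -- pointwise pmf facts in ENNReal
  have hZ' : ∀ k, P {ω | Z ω = k} = ENNReal.ofReal (mu lam k) := by
    intro k
    calc P {ω | Z ω = k} = ENNReal.ofReal ((P {ω | Z ω = k}).toReal) :=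
          (ENNReal.ofReal_toReal (measure_ne_top P _)).symm
      _ = ENNReal.ofReal (mu lam k) := by rw [hZpmf k]; rfl
  have hI1' : P {ω | I ω = 1} = ENNReal.ofReal p := by
    calc P {ω | I ω = 1} = ENNReal.ofReal ((P {ω | I ω = 1}).toReal) :=
          (ENNReal.ofReal_toReal (measure_ne_top P _)).symm
      _ = ENNReal.ofReal p := by rw [hI1]
  have hI0' : P {ω | I ω = 0} = ENNReal.ofReal (1 - p) := by
    calc P {ω | I ω = 0} = ENNReal.ofReal ((P {ω | I ω = 0}).toReal) :=
          (ENNReal.ofReal_toReal (measure_ne_top P _)).symm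
      _ = ENNReal.ofReal (1 - p) := by rw [hI0]
  have hI0meas : MeasurableSet {ω | I ω = 0} := hImeas (measurableSet_singleton 0)
  have hI1meas : MeasurableSet {ω | I ω = 1} := hImeas (measurableSet_singleton 1)
  -- the set where I is 0 or 1 has full measure
  have hN : P ({ω | I ω = 0 ∨ I ω = 1}ᶜ) = 0 := by
    have hunion : {ω | I ω = 0 ∨ I ω = 1} = {ω | I ω = 0} ∪ {ω | I ω = 1} := rfl
    have hdisj : Disjoint {ω | I ω = 0} {ω | I ω = 1} := by
      rw [Set.disjoint_left]
      intro ω h0 h1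
      simp only [Set.mem_setOf_eq] at h0 h1
      omega
    have hPu : P ({ω | I ω = 0} ∪ {ω | I ω = 1}) = 1 := by
      rw [measure_union hdisj hI1meas, hI0', hI1',
        ← ENNReal.ofReal_add (by linarith) hp0.le]
      norm_num
    rw [hunion, measure_compl (hI0meas.union hI1meas) (measure_ne_top P _), hPu]
    simp
  -- pmf of Y
  have hq : ∀ n, P {ω | I ω * Z ω = n} = ENNReal.ofReal (q lam p n) := by
    intro n
    have hconull : P ({ω | I ω * Z ω = n} ∩ {ω | I ω = 0 ∨ I ω = 1})
        = P {ω | I ω * Z ω = n} := measure_inter_conull hN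
    match n with
    | 0 =>
      have hset : {ω | I ω * Z ω = 0} ∩ {ω | I ω = 0 ∨ I ω = 1}
          = {ω | I ω = 0} ∪ ({ω | Z ω = 0} ∩ {ω | I ω = 1}) := by
        ext ω
        simp only [Set.mem_inter_iff, Set.mem_setOf_eq, Set.mem_union]
        constructor
        · rintro ⟨hy, h0 | h1⟩
          · exact Or.inl h0
          · right
            rw [h1, one_mul] at hy
            exact ⟨hy, h1⟩
        · rintro (h0 | ⟨hz, h1⟩)
          · exact ⟨by rw [h0, zero_mul], Or.inl h0⟩
          · exact ⟨by rw [h1, hz], Or.inr h1⟩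
      have hdisj2 : Disjoint {ω | I ω = 0} ({ω | Z ω = 0} ∩ {ω | I ω = 1}) := by
        rw [Set.disjoint_left]
        intro ω h0 h1
        simp only [Set.mem_inter_iff, Set.mem_setOf_eq] at h0 h1
        omega
      have hind : P ({ω | Z ω = 0} ∩ {ω | I ω = 1})
          = ENNReal.ofReal (mu lam 0) * ENNReal.ofReal p := by
        have := hindep.measure_inter_preimage_eq_mul {0} {1}
          (measurableSet_singleton 0) (measurableSet_singleton 1)
        rw [show Z ⁻¹' {0} = {ω | Z ω = 0} from rfl,
          show I ⁻¹' {1} = {ω | I ω = 1} from rfl] at this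
        rw [this, hZ', hI1']
      rw [← hconull, hset, measure_union hdisj2
        ((hZmeas (measurableSet_singleton 0)).inter hI1meas), hI0', hind,
        ← ENNReal.ofReal_mul (mu_nonneg hlam.le 0)]
      rw [← ENNReal.ofReal_add (by linarith) (mul_nonneg (mu_nonneg hlam.le 0) hp0.le)]
      congr 1
      unfold ZIPAux.q
      norm_num
      ring
    | Nat.succ k =>
      have hset : {ω | I ω * Z ω = k + 1} ∩ {ω | I ω = 0 ∨ I ω = 1}
          = {ω | Z ω = k + 1} ∩ {ω | I ω = 1} := by
        ext ω
        simp only [Set.mem_inter_iff, Set.mem_setOf_eq]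
        constructor
        · rintro ⟨hy, h0 | h1⟩
          · rw [h0, zero_mul] at hy; omega
          · rw [h1, one_mul] at hy; exact ⟨hy, h1⟩
        · rintro ⟨hz, h1⟩
          exact ⟨by rw [h1, hz, one_mul], Or.inr h1⟩
      have hind : P ({ω | Z ω = k + 1} ∩ {ω | I ω = 1})
          = ENNReal.ofReal (mu lam (k+1)) * ENNReal.ofReal p := by
        have := hindep.measure_inter_preimage_eq_mul {k+1} {1}
          (measurableSet_singleton (k+1)) (measurableSet_singleton 1)
        rw [show Z ⁻¹' {k+1} = {ω | Z ω = k + 1} from rfl,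
          show I ⁻¹' {1} = {ω | I ω = 1} from rfl] at this
        rw [this, hZ', hI1']
      rw [← hconull, hset, hind, ← ENNReal.ofReal_mul (mu_nonneg hlam.le (k+1))]
      rw [q_succ k]
      congr 1
      ring
  -- lintegral conversion
  have hlin : ∀ f : ℕ → ℝ, (∫⁻ ω, ENNReal.ofReal (f (I ω * Z ω)) ∂P)
      = ∑' n, ENNReal.ofReal (q lam p n * f n) := by
    intro f
    have hfm : Measurable (fun n : ℕ => ENNReal.ofReal (f n)) := Measurable.of_discrete
    have h1 : (∫⁻ ω, ENNReal.ofReal (f (I ω * Z ω)) ∂P)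
        = ∫⁻ n, ENNReal.ofReal (f n) ∂(P.map (fun ω => I ω * Z ω)) :=
      (lintegral_map hfm hYmeas).symm
    rw [h1, lintegral_countable']
    refine tsum_congr fun n => ?_
    rw [Measure.map_apply hYmeas (measurableSet_singleton n),
      show (fun ω => I ω * Z ω) ⁻¹' {n} = {ω | I ω * Z ω = n} from rfl, hq n,
      mul_comm, ← ENNReal.ofReal_mul (q_nonneg hlam.le hp0.le hp1 n)]
  -- mean-zero conversion
  have hmean' : ∑' n, q lam p n * g n = 0 := by
    have hgsm : AEStronglyMeasurable g (P.map (fun ω => I ω * Z ω)) :=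
      (Measurable.of_discrete (f := g)).stronglyMeasurable.aestronglyMeasurable
    have hgint : Integrable g (P.map (fun ω => I ω * Z ω)) :=
      (integrable_map_measure hgsm hYmeas.aemeasurable).2 hint
    have hcalc : ∫ ω, g (I ω * Z ω) ∂P = ∑' n, q lam p n * g n := by
      have h1 : ∫ ω, g (I ω * Z ω) ∂P = ∫ n, g n ∂(P.map (fun ω => I ω * Z ω)) :=
        (integral_map hYmeas.aemeasurable hgsm).symm
      rw [h1, integral_countable' hgint]
      refine tsum_congr fun n => ?_
      rw [measureReal_def, Measure.map_apply hYmeas (measurableSet_singleton n),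
        show (fun ω => I ω * Z ω) ⁻¹' {n} = {ω | I ω * Z ω = n} from rfl, hq n,
        ENNReal.toReal_ofReal (q_nonneg hlam.le hp0.le hp1 n), smul_eq_mul]
    rw [← hcalc]
    exact hmean
  -- rewrite through hlin
  have hL : (∫⁻ ω, ENNReal.ofReal ((g (I ω * Z ω)) ^ 2) ∂P)
      = ∑' n, ENNReal.ofReal (q lam p n * g n ^ 2) := hlin (fun n => g n ^ 2)
  have hRt : (∫⁻ ω, ENNReal.ofReal ((g (I ω * Z ω + 1) - g (I ω * Z ω)) ^ 2) ∂P)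
      = ∑' n, ENNReal.ofReal (q lam p n * (g (n+1) - g n) ^ 2) :=
    hlin (fun n => (g (n+1) - g n) ^ 2)
  rw [hL] at hsq ⊢
  rw [hRt]
  -- constants
  set M := max ((Real.exp lam - 1) / lam) (Real.exp lam / ((1 - p) * Real.exp lam + p)) with hM
  set Rr := lam * (p + (1 - p) * M) with hRrdef
  have hexp1 : (1:ℝ) ≤ Real.exp lam := Real.one_le_exp hlam.le
  have hM0 : 0 ≤ M :=
    le_trans (div_nonneg (by linarith) hlam.le) (le_max_left _ _)
  have hRr0 : 0 < Rr := by
    have : 0 ≤ (1 - p) * M := mul_nonneg hp1' hM0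
    rw [hRrdef]; nlinarith
  have hR1 : p * lam ≤ Rr := by
    have h := mul_nonneg hp1' hM0
    rw [hRrdef]; nlinarith
  have hR2 : lam + (1 - p) * (Real.exp lam - 1 - lam) ≤ Rr := by
    have hM1 : (Real.exp lam - 1) / lam ≤ M := le_max_left _ _
    have h1 : lam * (1-p) * ((Real.exp lam - 1)/lam) ≤ lam * (1-p) * M :=
      mul_le_mul_of_nonneg_left hM1 (mul_nonneg hlam.le hp1')
    have h2 : lam * (1-p) * ((Real.exp lam - 1)/lam) = (1-p) * (Real.exp lam - 1) := by
      field_simp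
    rw [hRrdef]
    nlinarith [h1, h2]
  -- summability of q g²
  have hg2 : Summable (fun n => q lam p n * g n ^ 2) := by
    have h1 := ENNReal.summable_toReal hsq.ne
    refine h1.congr fun n => ?_
    rw [ENNReal.toReal_ofReal (mul_nonneg (q_nonneg hlam.le hp0.le hp1 n) (sq_nonneg _))]
  -- case split on RHS sum
  rcases eq_or_ne (∑' n, ENNReal.ofReal (q lam p n * (g (n+1) - g n) ^ 2)) ⊤ with htop | hfin2
  · rw [htop, ENNReal.mul_top]
    · exact le_top
    · rw [ne_eq, ENNReal.ofReal_eq_zero, not_le]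
      exact hRr0
  · have hDsum : Summable (fun n => q lam p n * (g (n+1) - g n) ^ 2) := by
      have h1 := ENNReal.summable_toReal hfin2
      refine h1.congr fun n => ?_
      rw [ENNReal.toReal_ofReal
        (mul_nonneg (q_nonneg hlam.le hp0.le hp1 n) (sq_nonneg _))]
    have hkey' : ∀ i : ℕ, (∑' jk : ℕ × ℕ, hh (q lam p) i jk)
        ≤ ENNReal.ofReal (Rr * q lam p i) := by
      intro i
      have heq : ∑' jk : ℕ × ℕ, hh (q lam p) i jk
          = ENNReal.ofReal (∑' jk : ℕ × ℕ, hfun lam p i jk) := by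
        rw [ENNReal.ofReal_tsum_of_nonneg (hfun_nonneg hlam.le hp0.le hp1 i)
          (summable_hfun hlam.le hp0.le hp1 i)]
        rfl
      rw [heq]
      exact ENNReal.ofReal_le_ofReal (hkey_real hlam hp0 hp1 hR1 hR2 i)
    have hcore := core_ineq (w := q lam p) (g := g) (R := Rr) hRr0.le
      (q_nonneg hlam.le hp0.le hp1) summable_q tsum_q hg2 hDsum hmean' hkey'
    calc ∑' n, ENNReal.ofReal (q lam p n * g n ^ 2)
        = ENNReal.ofReal (∑' n, q lam p n * g n ^ 2) :=
          (ENNReal.ofReal_tsum_of_nonneg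
            (fun n => mul_nonneg (q_nonneg hlam.le hp0.le hp1 n) (sq_nonneg _)) hg2).symm
      _ ≤ ENNReal.ofReal (Rr * ∑' n, q lam p n * (g (n+1) - g n) ^ 2) :=
          ENNReal.ofReal_le_ofReal hcore
      _ = ENNReal.ofReal Rr * ENNReal.ofReal (∑' n, q lam p n * (g (n+1) - g n) ^ 2) :=
          ENNReal.ofReal_mul hRr0.le
      _ = ENNReal.ofReal Rr * ∑' n, ENNReal.ofReal (q lam p n * (g (n+1) - g n) ^ 2) := by
          rw [ENNReal.ofReal_tsum_of_nonneg
            (fun n => mul_nonneg (q_nonneg hlam.le hp0.le hp1 n) (sq_nonneg _)) hDsum]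
end
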